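/- arXiv:1706.04767 — 3 statements merged into one kernel-verified Lean document; each statement's English description precedes it below -/
import Mathlib

section
/- If α ≤ 1 and P(lim_{|k|→∞} ‖Y_k‖ = 0) = 1, then P(Σ_{j∈ℤ} ‖Θ_j‖ < ∞) = 1. -/
open MeasureTheory ProbabilityTheory Set Filter
open scoped ENNReal NNReal Topology

noncomputable section
set_option linter.unusedSectionVars false
set_option maxHeartbeats 1000000

/-- The iterated backshift operator: `(B^k x) j = x (j - k)`. -/
def backshift {V : Type*} (k : ℤ) (x : ℤ → V) : ℤ → V := fun j => x (j - k)

namespace Stmt7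

variable {V : Type*} [NormedAddCommGroup V]

/-- The supremum of the norms of the coordinates. -/
def Mf (y : ℤ → V) : ℝ≥0∞ := ⨆ j, (‖y j‖₊ : ℝ≥0∞)

/-- The sum of the norms of the coordinates. -/
def Sf (y : ℤ → V) : ℝ≥0∞ := ∑' j, (‖y j‖₊ : ℝ≥0∞)

/-- Sequences whose norms tend to `0` at `±∞`. -/
def Cset (V : Type*) [NormedAddCommGroup V] : Set (ℤ → V) :=
  {y | Tendsto (fun k : ℤ => ‖y k‖) cofinite (𝓝 0)}

/-- Sequences tending to zero whose first argmax is at time `0`. -/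
def A0 (V : Type*) [NormedAddCommGroup V] : Set (ℤ → V) :=
  {y | y ∈ Cset V ∧ y ≠ 0 ∧ (‖y 0‖₊ : ℝ≥0∞) = Mf y ∧ ∀ i : ℤ, i < 0 → (‖y i‖₊ : ℝ≥0∞) < Mf y}

/-- Sequences tending to zero with non-summable norms. -/
def Dset (V : Type*) [NormedAddCommGroup V] : Set (ℤ → V) :=
  {y | y ∈ Cset V ∧ y ≠ 0 ∧ Sf y = ⊤}

/-- Sequences whose first argmax is at time `k`. -/
def Ak (V : Type*) [NormedAddCommGroup V] (k : ℤ) : Set (ℤ → V) :=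
  backshift (-k) ⁻¹' A0 V

/-! ### Elementary facts about the backshift -/

lemma backshift_apply (k : ℤ) (x : ℤ → V) (j : ℤ) : backshift k x j = x (j - k) := rfl

lemma backshift_comp (a b : ℤ) (x : ℤ → V) :
    backshift a (backshift b x) = backshift (a + b) x := by
  funext j; simp [backshift, sub_sub]

lemma backshift_zero (x : ℤ → V) : backshift 0 x = x := by
  funext j; simp [backshift]

lemma measurable_backshift [MeasurableSpace V] (k : ℤ) :
    Measurable (backshift k : (ℤ → V) → ℤ → V) :=
  measurable_pi_lambda _ fun j => measurable_pi_apply (j - k)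

lemma tendsto_cofinite_shift (m : ℤ) (y : ℤ → V) :
    backshift m y ∈ Cset V ↔ y ∈ Cset V := by
  constructor
  · intro h
    have h2 : Tendsto (fun k : ℤ => k + m) cofinite cofinite :=
      (add_left_injective m).tendsto_cofinite
    have h3 := h.comp h2
    have he : ((fun k : ℤ => ‖backshift m y k‖) ∘ fun k : ℤ => k + m)
        = fun k : ℤ => ‖y k‖ := by
      funext k; simp [backshift]
    rw [Cset, mem_setOf_eq, ← he]
    exact h3
  · intro h
    have h2 : Tendsto (fun k : ℤ => k - m) cofinite cofinite :=
      sub_left_injective.tendsto_cofinite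
    have h3 := h.comp h2
    have he : ((fun k : ℤ => ‖y k‖) ∘ fun k : ℤ => k - m)
        = fun k : ℤ => ‖backshift m y k‖ := rfl
    rw [Cset, mem_setOf_eq, ← he]
    exact h3

lemma Mf_shift (m : ℤ) (y : ℤ → V) : Mf (backshift m y) = Mf y := by
  unfold Mf
  exact (Equiv.subRight m).iSup_congr (fun j => rfl)

lemma Sf_shift (m : ℤ) (y : ℤ → V) : Sf (backshift m y) = Sf y := by
  unfold Sf
  exact (Equiv.subRight m).tsum_eq (fun j => (‖y j‖₊ : ℝ≥0∞))

lemma backshift_eq_zero (m : ℤ) (y : ℤ → V) : backshift m y = 0 ↔ y = 0 := by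
  constructor
  · intro h; funext j
    have := congrFun h (j + m)
    simpa [backshift] using this
  · intro h; subst h; funext j; rfl

lemma Dset_shift (m : ℤ) (y : ℤ → V) : backshift m y ∈ Dset V ↔ y ∈ Dset V := by
  simp only [Dset, mem_setOf_eq]
  rw [tendsto_cofinite_shift, Ne, backshift_eq_zero, Sf_shift]

/-! ### Measurability -/

section Meas
variable [MeasurableSpace V] [BorelSpace V]

lemma measurable_nn (j : ℤ) : Measurable fun y : ℤ → V => (‖y j‖₊ : ℝ≥0∞) :=
  measurable_coe_nnreal_ennreal.comp (measurable_pi_apply j).nnnorm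

lemma measurable_Mf : Measurable (Mf : (ℤ → V) → ℝ≥0∞) :=
  Measurable.iSup fun j => measurable_nn j

lemma measurable_Sf : Measurable (Sf : (ℤ → V) → ℝ≥0∞) :=
  Measurable.ennreal_tsum fun j => measurable_nn j

lemma measurableSet_Cset : MeasurableSet (Cset V) := by
  have : Cset V = {y : ℤ → V | Tendsto (fun k : ℤ => ‖y k‖) atBot (𝓝 0)}
      ∩ {y : ℤ → V | Tendsto (fun k : ℤ => ‖y k‖) atTop (𝓝 0)} := by
    ext y
    simp only [Cset, mem_setOf_eq, mem_inter_iff, Int.cofinite_eq, tendsto_sup]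
  rw [this]
  exact (measurableSet_tendsto (𝓝 0) fun k => (measurable_pi_apply k).norm).inter
    (measurableSet_tendsto (𝓝 0) fun k => (measurable_pi_apply k).norm)

lemma measurableSet_ne_zero : MeasurableSet {y : ℤ → V | y ≠ 0} := by
  have : {y : ℤ → V | y ≠ 0} = ⋃ j : ℤ, {y : ℤ → V | y j ≠ 0} := by
    ext y
    simp only [mem_setOf_eq, mem_iUnion]
    constructor
    · intro h
      by_contra hc
      push_neg at hc
      exact h (funext fun j => hc j)
    · rintro ⟨j, hj⟩ h0
      exact hj (by rw [h0]; rfl)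
  rw [this]
  refine MeasurableSet.iUnion fun j => ?_
  have : {y : ℤ → V | y j ≠ 0} = ((fun y : ℤ → V => y j) ⁻¹' {0})ᶜ := by
    ext y; simp
  rw [this]
  exact ((measurable_pi_apply j) (measurableSet_singleton (0:V))).compl

lemma measurableSet_coord_ne_zero (j : ℤ) : MeasurableSet {y : ℤ → V | y j ≠ 0} := by
  have : {y : ℤ → V | y j ≠ 0} = ((fun y : ℤ → V => y j) ⁻¹' {0})ᶜ := by
    ext y; simp
  rw [this]
  exact ((measurable_pi_apply j) (measurableSet_singleton (0:V))).compl

lemma measurableSet_coord_gt (j : ℤ) (u : ℝ) :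
    MeasurableSet {y : ℤ → V | u < ‖y j‖} :=
  measurableSet_lt measurable_const (measurable_pi_apply j).norm

lemma measurableSet_eqMf : MeasurableSet {y : ℤ → V | (‖y 0‖₊ : ℝ≥0∞) = Mf y} := by
  have : {y : ℤ → V | (‖y 0‖₊ : ℝ≥0∞) = Mf y}
      = {y : ℤ → V | (‖y 0‖₊ : ℝ≥0∞) ≤ Mf y} ∩ {y : ℤ → V | Mf y ≤ (‖y 0‖₊ : ℝ≥0∞)} := by
    ext y; simp only [mem_setOf_eq, mem_inter_iff]
    exact le_antisymm_iff
  rw [this]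
  exact (measurableSet_le (measurable_nn 0) measurable_Mf).inter
    (measurableSet_le measurable_Mf (measurable_nn 0))

lemma measurableSet_A0 : MeasurableSet (A0 V) := by
  have hA : A0 V = (Cset V ∩ {y : ℤ → V | y ≠ 0})
      ∩ ({y : ℤ → V | (‖y 0‖₊ : ℝ≥0∞) = Mf y}
        ∩ ⋂ i : ℤ, ⋂ (_ : i < 0), {y : ℤ → V | (‖y i‖₊ : ℝ≥0∞) < Mf y}) := by
    ext y
    simp only [A0, mem_setOf_eq, mem_inter_iff, mem_iInter]
    tauto
  rw [hA]
  exact (measurableSet_Cset.inter measurableSet_ne_zero).inter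
    (measurableSet_eqMf.inter (MeasurableSet.iInter fun i => MeasurableSet.iInter fun _ =>
      measurableSet_lt (measurable_nn i) measurable_Mf))

lemma measurableSet_Dset : MeasurableSet (Dset V) :=
  measurableSet_Cset.inter (measurableSet_ne_zero.inter
    (measurable_Sf (MeasurableSet.singleton ⊤)))

end Meas

/-! ### Scale invariance -/

section Scale
variable [NormedSpace ℝ V]

lemma nn_smul (c : ℝ) (y : ℤ → V) (j : ℤ) :
    (‖(c • y) j‖₊ : ℝ≥0∞) = (‖c‖₊ : ℝ≥0∞) * (‖y j‖₊ : ℝ≥0∞) := by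
  have : (c • y) j = c • y j := rfl
  rw [this, nnnorm_smul, ENNReal.coe_mul]

lemma Mf_smul (c : ℝ) (y : ℤ → V) : Mf (c • y) = (‖c‖₊ : ℝ≥0∞) * Mf y := by
  unfold Mf
  rw [ENNReal.mul_iSup]
  exact iSup_congr fun j => nn_smul c y j

lemma Sf_smul (c : ℝ) (y : ℤ → V) : Sf (c • y) = (‖c‖₊ : ℝ≥0∞) * Sf y := by
  unfold Sf
  rw [← ENNReal.tsum_mul_left]
  exact tsum_congr fun j => nn_smul c y j

lemma cnn_ne_zero {c : ℝ} (hc : 0 < c) : (‖c‖₊ : ℝ≥0∞) ≠ 0 := by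
  simp [hc.ne']

lemma cnn_ne_top (c : ℝ) : (‖c‖₊ : ℝ≥0∞) ≠ ⊤ := ENNReal.coe_ne_top

lemma Cset_smul {c : ℝ} (hc : 0 < c) (y : ℤ → V) :
    c • y ∈ Cset V ↔ y ∈ Cset V := by
  simp only [Cset, mem_setOf_eq]
  have he : (fun k : ℤ => ‖(c • y) k‖) = fun k : ℤ => c * ‖y k‖ := by
    funext k
    have : (c • y) k = c • y k := rfl
    rw [this, norm_smul, Real.norm_eq_abs, abs_of_pos hc]
  rw [he]
  constructor
  · intro h
    have := h.const_mul c⁻¹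
    simpa [← mul_assoc, inv_mul_cancel₀ hc.ne'] using this
  · intro h
    have := h.const_mul c
    simpa using this

lemma smul_ne_zero_iff' {c : ℝ} (hc : 0 < c) (y : ℤ → V) :
    c • y ≠ 0 ↔ y ≠ 0 := by
  rw [not_iff_not, smul_eq_zero]
  simp [hc.ne']

lemma A0_smul {c : ℝ} (hc : 0 < c) (y : ℤ → V) :
    c • y ∈ A0 V ↔ y ∈ A0 V := by
  simp only [A0, mem_setOf_eq]
  rw [Cset_smul hc, smul_ne_zero_iff' hc, Mf_smul, nn_smul]
  constructor
  · rintro ⟨h1, h2, h3, h4⟩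
    refine ⟨h1, h2, ?_, fun i hi => ?_⟩
    · exact le_antisymm
        ((ENNReal.mul_le_mul_iff_right (cnn_ne_zero hc) (cnn_ne_top c)).mp h3.le)
        ((ENNReal.mul_le_mul_iff_right (cnn_ne_zero hc) (cnn_ne_top c)).mp h3.ge)
    · have := h4 i hi
      rw [nn_smul] at this
      exact (ENNReal.mul_lt_mul_iff_right (cnn_ne_zero hc) (cnn_ne_top c)).mp this
  · rintro ⟨h1, h2, h3, h4⟩
    refine ⟨h1, h2, by rw [h3], fun i hi => ?_⟩
    rw [nn_smul]
    exact (ENNReal.mul_lt_mul_iff_right (cnn_ne_zero hc) (cnn_ne_top c)).mpr (h4 i hi)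

lemma Dset_smul {c : ℝ} (hc : 0 < c) (y : ℤ → V) :
    c • y ∈ Dset V ↔ y ∈ Dset V := by
  simp only [Dset, mem_setOf_eq]
  rw [Cset_smul hc, smul_ne_zero_iff' hc, Sf_smul]
  rw [ENNReal.mul_eq_top]
  constructor
  · rintro ⟨h1, h2, h3⟩
    refine ⟨h1, h2, ?_⟩
    rcases h3 with ⟨_, h⟩ | ⟨h, _⟩
    · exact h
    · exact absurd h (cnn_ne_top c)
  · rintro ⟨h1, h2, h3⟩
    exact ⟨h1, h2, Or.inl ⟨cnn_ne_zero hc, h3⟩⟩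

end Scale

/-! ### The argmax decomposition -/

lemma mem_Ak_iff (k : ℤ) (y : ℤ → V) :
    y ∈ Ak V k ↔ y ∈ Cset V ∧ y ≠ 0 ∧ (‖y k‖₊ : ℝ≥0∞) = Mf y
      ∧ ∀ i : ℤ, i < k → (‖y i‖₊ : ℝ≥0∞) < Mf y := by
  have happ : ∀ j : ℤ, backshift (-k) y j = y (j + k) := by
    intro j; simp [backshift, sub_neg_eq_add]
  constructor
  · rintro ⟨h1, h2, h3, h4⟩
    rw [tendsto_cofinite_shift] at h1
    rw [Ne, backshift_eq_zero] at h2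
    rw [Mf_shift, happ, zero_add] at h3
    refine ⟨h1, h2, h3, fun i hi => ?_⟩
    have := h4 (i - k) (by omega)
    rwa [Mf_shift, happ, sub_add_cancel] at this
  · rintro ⟨h1, h2, h3, h4⟩
    refine ⟨?_, ?_, ?_, ?_⟩
    · rwa [tendsto_cofinite_shift]
    · rwa [Ne, backshift_eq_zero]
    · rwa [Mf_shift, happ, zero_add]
    · intro i hi
      rw [Mf_shift, happ]
      exact h4 (i + k) (by omega)

lemma Mf_pos {y : ℤ → V} (hy : y ≠ 0) : 0 < Mf y := by
  obtain ⟨j, hj⟩ : ∃ j, y j ≠ 0 := by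
    by_contra hc; push_neg at hc
    exact hy (funext fun j => hc j)
  calc (0:ℝ≥0∞) < (‖y j‖₊ : ℝ≥0∞) := by simpa using hj
  _ ≤ Mf y := le_iSup (fun j => (‖y j‖₊ : ℝ≥0∞)) j

lemma finite_exceed {y : ℤ → V} (hy : y ∈ Cset V) {c : ℝ} (hc : 0 < c) :
    {j : ℤ | c ≤ ‖y j‖}.Finite := by
  have h : ∀ᶠ j in (cofinite : Filter ℤ), ‖y j‖ < c :=
    Filter.Tendsto.eventually_lt_const hc hy
  have h2 := Filter.eventually_cofinite.mp h
  have : {j : ℤ | c ≤ ‖y j‖} = {j : ℤ | ¬ ‖y j‖ < c} := by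
    ext j; simp [not_lt]
  rw [this]; exact h2

lemma Mf_lt_top {y : ℤ → V} (hy : y ∈ Cset V) : Mf y < ⊤ := by
  have hF : {j : ℤ | (1:ℝ) ≤ ‖y j‖}.Finite := finite_exceed hy one_pos
  set t : ℝ≥0 := hF.toFinset.sup (fun j => ‖y j‖₊) ⊔ 1 with ht
  have hb : ∀ j : ℤ, (‖y j‖₊ : ℝ≥0∞) ≤ (t : ℝ≥0∞) := by
    intro j
    rw [ENNReal.coe_le_coe]
    by_cases hj : (1:ℝ) ≤ ‖y j‖
    · exact le_sup_of_le_left (Finset.le_sup (f := fun j => ‖y j‖₊) (hF.mem_toFinset.mpr hj))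
    · refine le_sup_of_le_right ?_
      push_neg at hj
      have : ‖y j‖₊ ≤ (1:ℝ≥0) := by
        rw [← NNReal.coe_le_coe, coe_nnnorm]
        exact hj.le
      exact this
  exact lt_of_le_of_lt (iSup_le hb) (ENNReal.coe_lt_top)

lemma finite_exceed' {y : ℤ → V} (hy : y ∈ Cset V) {c : ℝ≥0∞} (hc : 0 < c) :
    {j : ℤ | c ≤ (‖y j‖₊ : ℝ≥0∞)}.Finite := by
  by_cases hctop : c = ⊤
  · have : {j : ℤ | c ≤ (‖y j‖₊ : ℝ≥0∞)} = ∅ := by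
      ext j
      simp only [mem_setOf_eq, mem_empty_iff_false, iff_false, not_le, hctop]
      exact ENNReal.coe_lt_top
    rw [this]; exact finite_empty
  · have hcr : 0 < c.toReal := ENNReal.toReal_pos hc.ne' hctop
    refine (finite_exceed hy hcr).subset ?_
    intro j hj
    simp only [mem_setOf_eq] at hj ⊢
    have := ENNReal.toReal_mono (by exact ENNReal.coe_ne_top) hj
    simpa using this

lemma exists_argmax {y : ℤ → V} (hy : y ∈ Cset V) (hy0 : y ≠ 0) :
    ∃ k : ℤ, y ∈ Ak V k := by
  set M := Mf y with hM
  have hM0 : M ≠ 0 := (Mf_pos hy0).ne'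
  have hMtop : M ≠ ⊤ := (Mf_lt_top hy).ne
  have hhalf : 0 < M / 2 := ENNReal.half_pos hM0
  have hF : {j : ℤ | M / 2 ≤ (‖y j‖₊ : ℝ≥0∞)}.Finite := finite_exceed' hy hhalf
  obtain ⟨j₀, hj₀⟩ : ∃ j₀ : ℤ, M / 2 < (‖y j₀‖₊ : ℝ≥0∞) := by
    have : M / 2 < M := ENNReal.half_lt_self hM0 hMtop
    rw [hM] at this
    exact lt_iSup_iff.mp this
  have hne : hF.toFinset.Nonempty := ⟨j₀, hF.mem_toFinset.mpr hj₀.le⟩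
  obtain ⟨j₁, hj₁G, hj₁max⟩ := hF.toFinset.exists_max_image
    (fun j => (‖y j‖₊ : ℝ≥0∞)) hne
  have hj₁ : (‖y j₁‖₊ : ℝ≥0∞) = M := by
    refine le_antisymm (le_iSup (fun j => (‖y j‖₊ : ℝ≥0∞)) j₁) (iSup_le fun j => ?_)
    by_cases hj : j ∈ hF.toFinset
    · exact hj₁max j hj
    · have hlt : (‖y j‖₊ : ℝ≥0∞) < M / 2 := by
        rw [hF.mem_toFinset] at hj
        exact not_le.mp hj
      exact hlt.le.trans (hj₀.le.trans (hj₁max j₀ (hF.mem_toFinset.mpr hj₀.le)))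
  have hE : {j : ℤ | (‖y j‖₊ : ℝ≥0∞) = M}.Finite := by
    refine hF.subset fun j hj => ?_
    simp only [mem_setOf_eq] at hj ⊢
    rw [hj]
    exact ENNReal.half_le_self
  have hEne : hE.toFinset.Nonempty := ⟨j₁, hE.mem_toFinset.mpr hj₁⟩
  refine ⟨hE.toFinset.min' hEne, ?_⟩
  rw [mem_Ak_iff]
  refine ⟨hy, hy0, ?_, fun i hi => ?_⟩
  · have := hE.toFinset.min'_mem hEne
    rwa [hE.mem_toFinset] at this
  · have hne' : (‖y i‖₊ : ℝ≥0∞) ≠ M := by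
      intro hcontra
      have : hE.toFinset.min' hEne ≤ i := hE.toFinset.min'_le i (hE.mem_toFinset.mpr hcontra)
      omega
    exact lt_of_le_of_ne (le_iSup (fun m => (‖y m‖₊ : ℝ≥0∞)) i) hne'

lemma Ak_disjoint : Pairwise (Function.onFun Disjoint (Ak V)) := by
  intro k l hkl
  rw [Function.onFun, Set.disjoint_left]
  intro y hyk hyl
  rw [mem_Ak_iff] at hyk hyl
  rcases lt_or_gt_of_ne hkl with h | h
  · exact absurd hyk.2.2.1 (hyl.2.2.2 k h).ne
  · exact absurd hyl.2.2.1 (hyk.2.2.2 l h).ne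

/-! ### Analytic lemmas -/

lemma lint_pareto {α : ℝ} (hα : 0 < α) {c : ℝ} (hc : 0 ≤ c) :
    ∫⁻ r in Ioi (0:ℝ), (if 1 < r * c then ENNReal.ofReal (α * r ^ (-α - 1)) else 0)
      = ENNReal.ofReal (c ^ α) := by
  rcases hc.eq_or_lt with h0 | hcpos
  · subst h0
    have : ∀ r : ℝ, (if 1 < r * 0 then ENNReal.ofReal (α * r ^ (-α - 1)) else 0) = 0 := by
      intro r; simp
    simp only [this, lintegral_const, zero_mul, Real.zero_rpow hα.ne',
      ENNReal.ofReal_zero]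
  · have hinv : (0:ℝ) < c⁻¹ := inv_pos.mpr hcpos
    have hiff : ∀ r : ℝ, 1 < r * c ↔ c⁻¹ < r := by
      intro r
      rw [inv_lt_iff_one_lt_mul₀' hcpos, mul_comm]
    have hfun : ∀ r : ℝ, (if 1 < r * c then ENNReal.ofReal (α * r ^ (-α - 1)) else 0)
        = (Ioi c⁻¹).indicator (fun r => ENNReal.ofReal (α * r ^ (-α - 1))) r := by
      intro r
      rw [indicator_apply]
      simp only [mem_Ioi, hiff r]
    simp only [hfun]
    rw [lintegral_indicator measurableSet_Ioi, Measure.restrict_restrict measurableSet_Ioi,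
      Set.inter_eq_self_of_subset_left (Ioi_subset_Ioi hinv.le)]
    have hexp : -α - 1 < -1 := by linarith
    have hint : IntegrableOn (fun r : ℝ => α * r ^ (-α - 1)) (Ioi c⁻¹) volume :=
      (integrableOn_Ioi_rpow_of_lt hexp hinv).const_mul α
    have hae : 0 ≤ᵐ[volume.restrict (Ioi c⁻¹)] fun r : ℝ => α * r ^ (-α - 1) := by
      filter_upwards [ae_restrict_mem measurableSet_Ioi] with r hr
      have : (0:ℝ) < r := lt_trans hinv hr
      positivity
    rw [← MeasureTheory.ofReal_integral_eq_lintegral_ofReal hint hae]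
    congr 1
    rw [integral_const_mul, integral_Ioi_rpow_of_lt hexp hinv]
    have h1 : -α - 1 + 1 = -α := by ring
    rw [h1]
    rw [Real.inv_rpow hc, Real.rpow_neg hc]
    field_simp

lemma rpow_lower {α : ℝ} (hα : 0 < α) (hα1 : α ≤ 1) {t m : ℝ≥0∞}
    (ht : t ≤ m) (hm : m ≠ ⊤) : t * m ^ (α - 1) ≤ t ^ α := by
  rcases eq_or_ne t 0 with h0 | h0
  · simp [h0]
  have htop : t ≠ ⊤ := (lt_of_le_of_lt ht (lt_top_iff_ne_top.mpr hm)).ne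
  have key : m ^ (α - 1) ≤ t ^ (α - 1) := by
    have h1 : α - 1 = -(1 - α) := by ring
    rw [h1, ENNReal.rpow_neg, ENNReal.rpow_neg]
    exact ENNReal.inv_le_inv.mpr (ENNReal.rpow_le_rpow ht (by linarith))
  calc t * m ^ (α - 1) ≤ t * t ^ (α - 1) := mul_le_mul_right key t
  _ = t ^ (1:ℝ) * t ^ (α - 1) := by rw [ENNReal.rpow_one]
  _ = t ^ α := by rw [← ENNReal.rpow_add _ _ h0 htop]; norm_num

lemma tsum_rpow_top {α : ℝ} (hα : 0 < α) (hα1 : α ≤ 1) {y : ℤ → V}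
    (hM : Mf y ≠ ⊤) (hS : Sf y = ⊤) :
    ∑' j : ℤ, ((‖y j‖₊ : ℝ≥0∞)) ^ α = ⊤ := by
  have hm0 : Mf y ≠ 0 := by
    intro h
    have hz : ∀ j : ℤ, (‖y j‖₊ : ℝ≥0∞) = 0 := by
      intro j
      have := le_iSup (fun j => (‖y j‖₊ : ℝ≥0∞)) j
      rw [← Mf, h] at this
      exact le_zero_iff.mp this
    have : Sf y = 0 := by
      unfold Sf
      simp [hz]
    rw [this] at hS
    exact ENNReal.zero_ne_top hS
  have hpos : 0 < Mf y ^ (α - 1) := ENNReal.rpow_pos (pos_iff_ne_zero.mpr hm0) hM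
  have hle : (∑' j : ℤ, (‖y j‖₊ : ℝ≥0∞)) * Mf y ^ (α - 1)
      ≤ ∑' j : ℤ, ((‖y j‖₊ : ℝ≥0∞)) ^ α := by
    rw [← ENNReal.tsum_mul_right]
    exact ENNReal.tsum_le_tsum fun j =>
      rpow_lower hα hα1 (le_iSup (fun j => (‖y j‖₊ : ℝ≥0∞)) j) hM
  rw [Sf] at hS
  rw [hS, ENNReal.top_mul hpos.ne'] at hle
  exact top_le_iff.mp hle

lemma summable_iff_Sf_ne_top (y : ℤ → V) :
    (Summable fun j : ℤ => ‖y j‖) ↔ Sf y ≠ ⊤ := by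
  rw [Sf, ENNReal.tsum_coe_ne_top_iff_summable]
  constructor
  · intro h
    rw [← NNReal.summable_coe]
    simpa [coe_nnnorm] using h
  · intro h
    have := NNReal.summable_coe.mpr h
    simpa [coe_nnnorm] using this

/-! ### Shift invariance of the tail measure -/

lemma shift_map {V : Type*} [NormedAddCommGroup V] [MeasurableSpace V] [BorelSpace V]
    (ν : Measure (ℤ → V)) (h : ν.map (backshift 1) = ν) (m : ℤ) :
    ν.map (backshift m) = ν := by
  have hid : ν.map (backshift (0:ℤ)) = ν := by
    have : (backshift (0:ℤ) : (ℤ → V) → ℤ → V) = id := funext backshift_zero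
    rw [this, Measure.map_id]
  have hneg : ν.map (backshift (-1:ℤ)) = ν := by
    conv_lhs => rw [← h]
    rw [Measure.map_map (measurable_backshift _) (measurable_backshift _)]
    have : (backshift (-1:ℤ) : (ℤ → V) → ℤ → V) ∘ backshift 1 = backshift 0 := by
      funext x; rw [Function.comp_apply, backshift_comp]; norm_num
    rw [this]
    exact hid
  induction m using Int.induction_on with
  | zero => exact hid
  | succ n ih =>
    have : (backshift ((n:ℤ)+1) : (ℤ → V) → ℤ → V) = backshift 1 ∘ backshift n := by
      funext x; rw [Function.comp_apply, backshift_comp, add_comm]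
    rw [this, ← Measure.map_map (measurable_backshift _) (measurable_backshift _), ih, h]
  | pred n ih =>
    have : (backshift (-(n:ℤ)-1) : (ℤ → V) → ℤ → V) = backshift (-1) ∘ backshift (-n) := by
      funext x; rw [Function.comp_apply, backshift_comp]; ring_nf
    rw [this, ← Measure.map_map (measurable_backshift _) (measurable_backshift _), ih, hneg]

end Stmt7

open Stmt7

/-- **Summability of the spectral tail process when `α ≤ 1`.**
If `α ≤ 1` and `P(lim_{|k|→∞} ‖Y_k‖ = 0) = 1`, then `P(Σ_{j∈ℤ} ‖Θ_j‖ < ∞) = 1`. -/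
theorem statement7
    -- `V` plays the role of `ℝ^d` (`d ≥ 1`) equipped with an arbitrary norm
    {V : Type*} [NormedAddCommGroup V] [NormedSpace ℝ V] [FiniteDimensional ℝ V]
    [Nontrivial V] [MeasurableSpace V] [BorelSpace V]
    (α : ℝ) (hα : 0 < α)
    -- the tail measure and its properties
    (ν : Measure (ℤ → V))
    (hν0 : ν {0} = 0)
    (hν1 : ν {y : ℤ → V | 1 < ‖y 0‖} = 1)
    (hνshift : ν.map (backshift 1) = ν)
    (hνhom : ∀ A : Set (ℤ → V), MeasurableSet A → ∀ c : ℝ, 0 < c →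
      ν ((fun x => c • x) '' A) = ENNReal.ofReal (c ^ (-α)) * ν A)
    -- the tail process `Y` and the spectral tail process `Θ`
    {Ω : Type*} [MeasurableSpace Ω] (P : Measure Ω) [IsProbabilityMeasure P]
    (Y : Ω → ℤ → V) (hYmeas : Measurable Y)
    (hYlaw : P.map Y = ν.restrict {y : ℤ → V | 1 < ‖y 0‖})
    (Θ : Ω → ℤ → V) (hΘdef : ∀ ω, Θ ω = ‖Y ω 0‖⁻¹ • Y ω)
    (hPareto : ∀ u : ℝ, 1 ≤ u → P {ω | u < ‖Y ω 0‖} = ENNReal.ofReal (u ^ (-α)))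
    (hindep : IndepFun (fun ω => ‖Y ω 0‖) Θ P)
    (hpolar : ∀ H : (ℤ → V) → ℝ≥0∞, Measurable H →
      ∫⁻ y in {y : ℤ → V | y 0 ≠ 0}, H y ∂ν
        = ∫⁻ r in Ioi (0 : ℝ),
            (∫⁻ ω, H (r • Θ ω) ∂P) * ENNReal.ofReal (α * r ^ (-α - 1)))
    -- the statement
    (hα1 : α ≤ 1)
    (hY0 : P {ω | Tendsto (fun k : ℤ => ‖Y ω k‖) cofinite (𝓝 0)} = 1) :
    P {ω | Summable fun j : ℤ => ‖Θ ω j‖} = 1 := by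
  classical
  -- measurability of Θ
  have hΘfun : Θ = fun ω => ‖Y ω 0‖⁻¹ • Y ω := funext hΘdef
  have hΘmeas : Measurable Θ := by
    rw [hΘfun]
    apply measurable_pi_lambda
    intro j
    exact (((measurable_pi_apply 0).comp hYmeas).norm.inv).smul
      ((measurable_pi_apply j).comp hYmeas)
  -- the key sets
  set G : Set (ℤ → V) := Dset V ∩ {y : ℤ → V | 1 < ‖y 0‖} with hG
  set T : Set Ω := Θ ⁻¹' (A0 V ∩ Dset V) with hT
  have hTmeas : MeasurableSet T := hΘmeas (measurableSet_A0.inter measurableSet_Dset)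
  set Tk : ℤ → Set (ℤ → V) := fun k => A0 V ∩ Dset V ∩ {w : ℤ → V | 1 < ‖w (-k)‖} with hTk
  have hTkmeas : ∀ k, MeasurableSet (Tk k) := fun k =>
    (measurableSet_A0.inter measurableSet_Dset).inter (measurableSet_coord_gt (-k) 1)
  have hGmeas : MeasurableSet G := measurableSet_Dset.inter (measurableSet_coord_gt 0 1)
  -- A0 is contained in {y 0 ≠ 0}
  have hA0ne : ∀ y : ℤ → V, y ∈ A0 V → y 0 ≠ 0 := by
    rintro y ⟨hC, hne, heq, -⟩ h0
    have : (0:ℝ≥0∞) < (‖y 0‖₊ : ℝ≥0∞) := heq ▸ Mf_pos hne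
    rw [h0] at this
    simp at this
  -- STEP A : decomposition according to the position of the first argmax
  have stepA : ν G = ∑' k : ℤ, ν (Tk k) := by
    have hcover : G ⊆ ⋃ k : ℤ, Ak V k := by
      rintro y ⟨⟨hC, hne, -⟩, -⟩
      obtain ⟨k, hk⟩ := exists_argmax hC hne
      exact mem_iUnion.mpr ⟨k, hk⟩
    have hGeq : G = ⋃ k : ℤ, (Ak V k ∩ G) := by
      ext y
      constructor
      · intro hy
        obtain ⟨k, hk⟩ := mem_iUnion.mp (hcover hy)
        exact mem_iUnion.mpr ⟨k, hk, hy⟩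
      · rintro hy
        obtain ⟨k, -, hk⟩ := mem_iUnion.mp hy
        exact hk
    have hmeasAkG : ∀ k : ℤ, MeasurableSet (Ak V k ∩ G) := fun k =>
      ((measurable_backshift (-k)) measurableSet_A0).inter hGmeas
    have hdisj : Pairwise (Function.onFun Disjoint (fun k => Ak V k ∩ G)) := by
      intro k l hkl
      exact (Ak_disjoint hkl).mono inter_subset_left inter_subset_left
    rw [hGeq, measure_iUnion hdisj hmeasAkG]
    congr 1
    funext k
    have hpre : Ak V k ∩ G = backshift (-k) ⁻¹' (Tk k) := by
      ext y
      simp only [Ak, hTk, hG, mem_inter_iff, mem_preimage, mem_setOf_eq]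
      constructor
      · rintro ⟨h1, h2, h3⟩
        refine ⟨⟨h1, (Dset_shift _ _).mpr h2⟩, ?_⟩
        have : backshift (-k) y (-k) = y 0 := by
          rw [backshift_apply]; norm_num
        rw [this]; exact h3
      · rintro ⟨⟨h1, h2⟩, h3⟩
        have : backshift (-k) y (-k) = y 0 := by
          rw [backshift_apply]; norm_num
        rw [this] at h3
        exact ⟨h1, (Dset_shift _ _).mp h2, h3⟩
    rw [hpre, ← Measure.map_apply (measurable_backshift (-k)) (hTkmeas k),
      shift_map ν hνshift (-k)]
  -- STEP B : polar decomposition of each piece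
  have stepB : ∀ k : ℤ,
      ν (Tk k) = ∫⁻ ω in T, ENNReal.ofReal (‖Θ ω (-k)‖ ^ α) ∂P := by
    intro k
    set H : (ℤ → V) → ℝ≥0∞ := (Tk k).indicator (fun _ => (1:ℝ≥0∞)) with hH
    have hHmeas : Measurable H := measurable_one.indicator (hTkmeas k)
    have hpolar' := hpolar H hHmeas
    -- LHS of the polar formula
    have hLHS : ∫⁻ y in {y : ℤ → V | y 0 ≠ 0}, H y ∂ν = ν (Tk k) := by
      rw [hH, lintegral_indicator (hTkmeas k), setLIntegral_one,
        Measure.restrict_apply (hTkmeas k)]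
      congr 1
      rw [inter_eq_self_of_subset_left]
      intro y hy
      exact hA0ne y hy.1.1
    -- RHS of the polar formula
    have hRHS : (∫⁻ r in Ioi (0:ℝ),
          (∫⁻ ω, H (r • Θ ω) ∂P) * ENNReal.ofReal (α * r ^ (-α - 1)))
        = ∫⁻ ω in T, ENNReal.ofReal (‖Θ ω (-k)‖ ^ α) ∂P := by
      -- rewrite the integrand for r > 0
      have hpt : ∀ r : ℝ, 0 < r → ∀ ω : Ω,
          H (r • Θ ω) = (if ω ∈ T ∧ 1 < r * ‖Θ ω (-k)‖ then (1:ℝ≥0∞) else 0) := by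
        intro r hr ω
        rw [hH, indicator_apply]
        refine if_congr ?_ rfl rfl
        simp only [hTk, hT, mem_inter_iff, mem_setOf_eq, mem_preimage]
        rw [A0_smul hr, Dset_smul hr]
        have h5 : (r • Θ ω) (-k) = r • Θ ω (-k) := rfl
        rw [h5, norm_smul, Real.norm_eq_abs, abs_of_pos hr]
      have hstep1 : (∫⁻ r in Ioi (0:ℝ),
            (∫⁻ ω, H (r • Θ ω) ∂P) * ENNReal.ofReal (α * r ^ (-α - 1)))
          = ∫⁻ r in Ioi (0:ℝ), ∫⁻ ω, (if ω ∈ T ∧ 1 < r * ‖Θ ω (-k)‖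
              then ENNReal.ofReal (α * r ^ (-α - 1)) else 0) ∂P := by
        refine setLIntegral_congr_fun measurableSet_Ioi ?_
        intro r hr
        beta_reduce
        rw [← lintegral_mul_const' _ _ ENNReal.ofReal_ne_top]
        refine lintegral_congr fun ω => ?_
        rw [hpt r hr ω]
        split_ifs with h <;> simp
      rw [hstep1]
      -- swap the two integrals
      have hswap : (∫⁻ r in Ioi (0:ℝ), ∫⁻ ω, (if ω ∈ T ∧ 1 < r * ‖Θ ω (-k)‖
              then ENNReal.ofReal (α * r ^ (-α - 1)) else 0) ∂P)
          = ∫⁻ ω, (∫⁻ r in Ioi (0:ℝ), (if ω ∈ T ∧ 1 < r * ‖Θ ω (-k)‖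
              then ENNReal.ofReal (α * r ^ (-α - 1)) else 0)) ∂P := by
        apply lintegral_lintegral_swap
        have hset : MeasurableSet {p : ℝ × Ω | p.2 ∈ T ∧ 1 < p.1 * ‖Θ p.2 (-k)‖} := by
          refine (measurable_snd hTmeas).inter ?_
          exact measurableSet_lt measurable_const
            (measurable_fst.mul
              ((((measurable_pi_apply (-k)).comp hΘmeas).norm).comp measurable_snd))
        have hfun : Measurable fun p : ℝ × Ω => ENNReal.ofReal (α * p.1 ^ (-α - 1)) := by
          fun_prop
        have : (Function.uncurry fun (r : ℝ) (ω : Ω) =>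
            (if ω ∈ T ∧ 1 < r * ‖Θ ω (-k)‖ then ENNReal.ofReal (α * r ^ (-α - 1)) else 0))
            = {p : ℝ × Ω | p.2 ∈ T ∧ 1 < p.1 * ‖Θ p.2 (-k)‖}.indicator
                (fun p => ENNReal.ofReal (α * p.1 ^ (-α - 1))) := by
          funext p
          rw [Function.uncurry, indicator_apply]
          rfl
        rw [this]
        exact (hfun.indicator hset).aemeasurable
      rw [hswap]
      -- compute the inner integral
      rw [← lintegral_indicator hTmeas]
      refine lintegral_congr fun ω => ?_
      by_cases hω : ω ∈ T
      · have : ∀ r : ℝ, (if ω ∈ T ∧ 1 < r * ‖Θ ω (-k)‖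
            then ENNReal.ofReal (α * r ^ (-α - 1)) else 0)
            = (if 1 < r * ‖Θ ω (-k)‖ then ENNReal.ofReal (α * r ^ (-α - 1)) else 0) := by
          intro r
          by_cases h : 1 < r * ‖Θ ω (-k)‖ <;> simp [h, hω]
        simp only [this]
        rw [lint_pareto hα (norm_nonneg _), indicator_of_mem hω]
      · have : ∀ r : ℝ, (if ω ∈ T ∧ 1 < r * ‖Θ ω (-k)‖
            then ENNReal.ofReal (α * r ^ (-α - 1)) else 0) = 0 := by
          intro r
          simp [hω]
        simp only [this]
        rw [lintegral_zero, indicator_of_notMem hω]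
    rw [← hLHS, hpolar', hRHS]
  -- STEP C : summation over k
  have stepC : ν G = ∫⁻ ω in T, ∑' j : ℤ, ENNReal.ofReal (‖Θ ω j‖ ^ α) ∂P := by
    rw [stepA]
    simp only [stepB]
    rw [← lintegral_tsum]
    · refine lintegral_congr fun ω => ?_
      exact (Equiv.neg ℤ).tsum_eq (fun j => ENNReal.ofReal (‖Θ ω j‖ ^ α))
    · intro k
      have m1 : Measurable fun ω => ‖Θ ω (-k)‖ :=
        ((measurable_pi_apply (-k)).comp hΘmeas).norm
      have m2 : Measurable fun x : ℝ => ENNReal.ofReal (x ^ α) := by fun_prop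
      exact (m2.comp m1).aemeasurable
  -- STEP D : the integrand is infinite on T
  have stepD : ν G = ⊤ * P T := by
    rw [stepC]
    have : ∀ ω ∈ T, (∑' j : ℤ, ENNReal.ofReal (‖Θ ω j‖ ^ α)) = ⊤ := by
      intro ω hω
      have hmem : Θ ω ∈ A0 V ∩ Dset V := hω
      have hconv : ∀ j : ℤ, ENNReal.ofReal (‖Θ ω j‖ ^ α) = ((‖Θ ω j‖₊ : ℝ≥0∞)) ^ α := by
        intro j
        rw [← ENNReal.ofReal_rpow_of_nonneg (norm_nonneg _) hα.le,
          show ENNReal.ofReal ‖Θ ω j‖ = (‖Θ ω j‖₊ : ℝ≥0∞) from ofReal_norm _]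
      simp only [hconv]
      exact tsum_rpow_top hα hα1 (Mf_lt_top hmem.1.1).ne hmem.2.2.2
    rw [setLIntegral_congr_fun hTmeas this,
      setLIntegral_const]
  -- STEP E : conclusion
  have hGle : ν G ≤ 1 := by
    rw [← hν1]
    exact measure_mono inter_subset_right
  have hPT : P T = 0 := by
    by_contra h
    rw [stepD, ENNReal.top_mul h] at hGle
    simp at hGle
  have hνG0 : ν G = 0 := by rw [stepD, hPT, mul_zero]
  have hmeasN1 : MeasurableSet {ω | 1 < ‖Y ω 0‖} :=
    measurableSet_lt measurable_const ((measurable_pi_apply 0).comp hYmeas).norm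
  have hN1 : P {ω | 1 < ‖Y ω 0‖} = 1 := by
    have := hPareto 1 le_rfl
    rwa [Real.one_rpow, ENNReal.ofReal_one] at this
  have hmeasN2 : MeasurableSet {ω | Tendsto (fun k : ℤ => ‖Y ω k‖) cofinite (𝓝 0)} := by
    have he : {ω | Tendsto (fun k : ℤ => ‖Y ω k‖) cofinite (𝓝 0)} = Y ⁻¹' Cset V := rfl
    rw [he]
    exact hYmeas measurableSet_Cset
  have hN3 : P (Y ⁻¹' Dset V) = 0 := by
    rw [← Measure.map_apply hYmeas measurableSet_Dset, hYlaw,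
      Measure.restrict_apply measurableSet_Dset]
    exact hνG0
  have hgoal_eq : {ω | Summable fun j : ℤ => ‖Θ ω j‖} = Θ ⁻¹' {y : ℤ → V | Sf y ≠ ⊤} := by
    ext ω
    simp only [mem_setOf_eq, mem_preimage]
    exact summable_iff_Sf_ne_top (Θ ω)
  have hmeasGoal : MeasurableSet {ω | Summable fun j : ℤ => ‖Θ ω j‖} := by
    rw [hgoal_eq]
    exact hΘmeas ((measurable_Sf (measurableSet_singleton ⊤)).compl)
  rw [← prob_compl_eq_zero_iff hmeasGoal]
  have hsub : {ω | Summable fun j : ℤ => ‖Θ ω j‖}ᶜ ⊆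
      ({ω | 1 < ‖Y ω 0‖}ᶜ ∪ {ω | Tendsto (fun k : ℤ => ‖Y ω k‖) cofinite (𝓝 0)}ᶜ)
        ∪ Y ⁻¹' Dset V := by
    intro ω hω
    by_contra hc
    simp only [mem_union, mem_compl_iff, mem_setOf_eq, mem_preimage, not_or,
      not_not] at hc
    obtain ⟨⟨h1, h2⟩, h3⟩ := hc
    have hYne : Y ω ≠ 0 := by
      intro h0
      rw [h0] at h1
      have : ‖(0 : ℤ → V) 0‖ = 0 := by simp
      rw [this] at h1
      linarith
    have hSfne : Sf (Y ω) ≠ ⊤ := fun hS => h3 ⟨h2, hYne, hS⟩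
    have hsumY : Summable fun j : ℤ => ‖Y ω j‖ := (summable_iff_Sf_ne_top _).mpr hSfne
    have hsumΘ : Summable fun j : ℤ => ‖Θ ω j‖ := by
      have he : (fun j : ℤ => ‖Θ ω j‖) = fun j : ℤ => ‖Y ω 0‖⁻¹ * ‖Y ω j‖ := by
        funext j
        rw [hΘdef ω]
        have : (‖Y ω 0‖⁻¹ • Y ω) j = ‖Y ω 0‖⁻¹ • Y ω j := rfl
        rw [this, norm_smul, Real.norm_eq_abs,
          abs_of_nonneg (inv_nonneg.mpr (norm_nonneg _))]
      rw [he]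
      exact hsumY.mul_left _
    exact hω hsumΘ
  refine measure_mono_null hsub ?_
  refine measure_union_null (measure_union_null ?_ ?_) hN3
  · exact (prob_compl_eq_zero_iff hmeasN1).mpr hN1
  · exact (prob_compl_eq_zero_iff hmeasN2).mpr hY0
end
end

section
/- The candidate extremal index satisfies ϑ := P(sup_{j≥1} ‖Y_j‖ ≤ 1) = P(sup_{j≤−1} ‖Y_j‖ ≤ 1); equivalently, P(sup_{j≥1} ‖Y_j‖ > 1) = P(sup_{j≤−1} ‖Y_j‖ > 1). -/
open MeasureTheory ProbabilityTheory Set Filter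
open scoped ENNReal NNReal Topology

noncomputable section

section Aux

variable {V : Type*} [NormedAddCommGroup V] [MeasurableSpace V] [OpensMeasurableSpace V]

/-- First forward exceedance at time `n+1`. -/
def Aset (V : Type*) [Norm V] (n : ℕ) : Set (ℤ → V) :=
  {y | 1 < ‖y 0‖ ∧ 1 < ‖y ((n : ℤ) + 1)‖ ∧ ∀ j : ℤ, 1 ≤ j → j ≤ (n : ℤ) → ‖y j‖ ≤ 1}

/-- Last backward exceedance at time `-(n+1)`. -/
def Cset (V : Type*) [Norm V] (n : ℕ) : Set (ℤ → V) :=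
  {y | 1 < ‖y 0‖ ∧ 1 < ‖y (-(n : ℤ) - 1)‖ ∧ ∀ j : ℤ, -(n : ℤ) ≤ j → j ≤ -1 → ‖y j‖ ≤ 1}

lemma measurable_backshift (k : ℤ) : Measurable (backshift k : (ℤ → V) → ℤ → V) :=
  measurable_pi_lambda _ fun j => measurable_pi_apply (j - k)

lemma measurableSet_norm_lt (j : ℤ) : MeasurableSet {y : ℤ → V | 1 < ‖y j‖} :=
  measurableSet_lt measurable_const ((measurable_pi_apply j).norm)

lemma measurableSet_norm_le (j : ℤ) : MeasurableSet {y : ℤ → V | ‖y j‖ ≤ 1} :=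
  measurableSet_le ((measurable_pi_apply j).norm) measurable_const

lemma measurableSet_Aset (n : ℕ) : MeasurableSet (Aset V n) := by
  have h : Aset V n = ({y : ℤ → V | 1 < ‖y 0‖} ∩ {y : ℤ → V | 1 < ‖y ((n : ℤ) + 1)‖}) ∩
      ⋂ (j : ℤ), ⋂ (_ : 1 ≤ j), ⋂ (_ : j ≤ (n : ℤ)), {y : ℤ → V | ‖y j‖ ≤ 1} := by
    ext y
    simp only [Aset, Set.mem_setOf_eq, Set.mem_inter_iff, Set.mem_iInter]
    tauto
  rw [h]
  exact ((measurableSet_norm_lt 0).inter (measurableSet_norm_lt _)).inter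
    (MeasurableSet.iInter fun j => MeasurableSet.iInter fun _ =>
      MeasurableSet.iInter fun _ => measurableSet_norm_le j)

lemma measurableSet_Cset (n : ℕ) : MeasurableSet (Cset V n) := by
  have h : Cset V n = ({y : ℤ → V | 1 < ‖y 0‖} ∩ {y : ℤ → V | 1 < ‖y (-(n : ℤ) - 1)‖}) ∩
      ⋂ (j : ℤ), ⋂ (_ : -(n : ℤ) ≤ j), ⋂ (_ : j ≤ -1), {y : ℤ → V | ‖y j‖ ≤ 1} := by
    ext y
    simp only [Cset, Set.mem_setOf_eq, Set.mem_inter_iff, Set.mem_iInter]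
    tauto
  rw [h]
  exact ((measurableSet_norm_lt 0).inter (measurableSet_norm_lt _)).inter
    (MeasurableSet.iInter fun j => MeasurableSet.iInter fun _ =>
      MeasurableSet.iInter fun _ => measurableSet_norm_le j)

lemma preimage_Cset (n : ℕ) :
    (backshift (-((n : ℤ) + 1)) : (ℤ → V) → ℤ → V) ⁻¹' (Cset V n) = Aset V n := by
  ext y
  simp only [Set.mem_preimage, Aset, Cset, Set.mem_setOf_eq, backshift]
  rw [show (0 : ℤ) - -((n : ℤ) + 1) = (n : ℤ) + 1 by ring,
    show -(n : ℤ) - 1 - -((n : ℤ) + 1) = 0 by ring]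
  constructor
  · rintro ⟨h1, h2, h3⟩
    refine ⟨h2, h1, fun j hj1 hj2 => ?_⟩
    have := h3 (j - ((n : ℤ) + 1)) (by omega) (by omega)
    rwa [show j - ((n : ℤ) + 1) - -((n : ℤ) + 1) = j by ring] at this
  · rintro ⟨h1, h2, h3⟩
    refine ⟨h2, h1, fun j hj1 hj2 => ?_⟩
    exact h3 (j - -((n : ℤ) + 1)) (by omega) (by omega)

lemma disjoint_Aset : Pairwise (Function.onFun Disjoint (Aset V)) := by
  have key : ∀ n m : ℕ, n < m → ∀ y : ℤ → V, y ∈ Aset V n → y ∉ Aset V m := by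
    intro n m hnm y hy hym
    have h1 := hy.2.1
    have h2 := hym.2.2 ((n : ℤ) + 1) (by omega) (by omega)
    linarith
  intro n m hnm
  rcases lt_or_gt_of_ne hnm with h | h
  · exact Set.disjoint_left.mpr fun y hy hym => key n m h y hy hym
  · exact Set.disjoint_right.mpr fun y hy hym => key m n h y hy hym

lemma disjoint_Cset : Pairwise (Function.onFun Disjoint (Cset V)) := by
  have key : ∀ n m : ℕ, n < m → ∀ y : ℤ → V, y ∈ Cset V n → y ∉ Cset V m := by
    intro n m hnm y hy hym
    have h1 := hy.2.1
    have h2 := hym.2.2 (-(n : ℤ) - 1) (by omega) (by omega)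
    linarith
  intro n m hnm
  rcases lt_or_gt_of_ne hnm with h | h
  · exact Set.disjoint_left.mpr fun y hy hym => key n m h y hy hym
  · exact Set.disjoint_right.mpr fun y hy hym => key m n h y hy hym

lemma iUnion_Aset :
    (⋃ n, Aset V n) =
      {y : ℤ → V | ∃ j : ℤ, 1 ≤ j ∧ 1 < ‖y j‖} ∩ {y : ℤ → V | 1 < ‖y 0‖} := by
  classical
  ext y
  simp only [Set.mem_iUnion, Set.mem_inter_iff, Set.mem_setOf_eq]
  constructor
  · rintro ⟨n, h0, h1, _⟩
    exact ⟨⟨(n : ℤ) + 1, by omega, h1⟩, h0⟩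
  · rintro ⟨⟨j, hj1, hj2⟩, h0⟩
    have hQ : ∃ n : ℕ, 1 < ‖y ((n : ℤ) + 1)‖ :=
      ⟨(j - 1).toNat, by rwa [show ((j - 1).toNat : ℤ) + 1 = j by omega]⟩
    refine ⟨Nat.find hQ, h0, Nat.find_spec hQ, fun i hi1 hi2 => ?_⟩
    by_contra hc
    push_neg at hc
    have hi : 1 < ‖y (((i - 1).toNat : ℤ) + 1)‖ := by
      rwa [show ((i - 1).toNat : ℤ) + 1 = i by omega]
    exact absurd hi (Nat.find_min hQ (by omega))

lemma iUnion_Cset :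
    (⋃ n, Cset V n) =
      {y : ℤ → V | ∃ j : ℤ, j ≤ -1 ∧ 1 < ‖y j‖} ∩ {y : ℤ → V | 1 < ‖y 0‖} := by
  classical
  ext y
  simp only [Set.mem_iUnion, Set.mem_inter_iff, Set.mem_setOf_eq]
  constructor
  · rintro ⟨n, h0, h1, _⟩
    exact ⟨⟨-(n : ℤ) - 1, by omega, h1⟩, h0⟩
  · rintro ⟨⟨j, hj1, hj2⟩, h0⟩
    have hQ : ∃ n : ℕ, 1 < ‖y (-(n : ℤ) - 1)‖ :=
      ⟨(-j - 1).toNat, by rwa [show -(((-j - 1).toNat : ℤ)) - 1 = j by omega]⟩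
    refine ⟨Nat.find hQ, h0, Nat.find_spec hQ, fun i hi1 hi2 => ?_⟩
    by_contra hc
    push_neg at hc
    have hi : 1 < ‖y (-(((-i - 1).toNat : ℤ)) - 1)‖ := by
      rwa [show -(((-i - 1).toNat : ℤ)) - 1 = i by omega]
    exact absurd hi (Nat.find_min hQ (by omega))

end Aux

/-- **Alternative expression for the candidate extremal index.**
`ϑ := P(sup_{j≥1} ‖Y_j‖ ≤ 1) = P(sup_{j≤−1} ‖Y_j‖ ≤ 1)`; equivalently,
`P(sup_{j≥1} ‖Y_j‖ > 1) = P(sup_{j≤−1} ‖Y_j‖ > 1)`. -/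
theorem statement8
    -- `V` plays the role of `ℝ^d` (`d ≥ 1`) equipped with an arbitrary norm
    {V : Type*} [NormedAddCommGroup V] [NormedSpace ℝ V] [FiniteDimensional ℝ V]
    [Nontrivial V] [MeasurableSpace V] [BorelSpace V]
    (α : ℝ) (hα : 0 < α)
    -- the tail measure and its properties
    (ν : Measure (ℤ → V))
    (hν0 : ν {0} = 0)
    (hν1 : ν {y : ℤ → V | 1 < ‖y 0‖} = 1)
    (hνshift : ν.map (backshift 1) = ν)
    (hνhom : ∀ A : Set (ℤ → V), MeasurableSet A → ∀ c : ℝ, 0 < c →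
      ν ((fun x => c • x) '' A) = ENNReal.ofReal (c ^ (-α)) * ν A)
    -- the tail process `Y` and the spectral tail process `Θ`
    {Ω : Type*} [MeasurableSpace Ω] (P : Measure Ω) [IsProbabilityMeasure P]
    (Y : Ω → ℤ → V) (hYmeas : Measurable Y)
    (hYlaw : P.map Y = ν.restrict {y : ℤ → V | 1 < ‖y 0‖})
    (Θ : Ω → ℤ → V) (hΘdef : ∀ ω, Θ ω = ‖Y ω 0‖⁻¹ • Y ω)
    (hPareto : ∀ u : ℝ, 1 ≤ u → P {ω | u < ‖Y ω 0‖} = ENNReal.ofReal (u ^ (-α)))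
    (hindep : IndepFun (fun ω => ‖Y ω 0‖) Θ P)
    (hpolar : ∀ H : (ℤ → V) → ℝ≥0∞, Measurable H →
      ∫⁻ y in {y : ℤ → V | y 0 ≠ 0}, H y ∂ν
        = ∫⁻ r in Ioi (0 : ℝ),
            (∫⁻ ω, H (r • Θ ω) ∂P) * ENNReal.ofReal (α * r ^ (-α - 1)))
    :
    P {ω | ∀ j : ℤ, 1 ≤ j → ‖Y ω j‖ ≤ 1} = P {ω | ∀ j : ℤ, j ≤ -1 → ‖Y ω j‖ ≤ 1} ∧
      P {ω | ∃ j : ℤ, 1 ≤ j ∧ 1 < ‖Y ω j‖} = P {ω | ∃ j : ℤ, j ≤ -1 ∧ 1 < ‖Y ω j‖} := by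
  classical
  -- shift invariance under all backshifts
  have hmb : ∀ k : ℤ, Measurable (backshift k : (ℤ → V) → ℤ → V) := fun k =>
    measurable_backshift k
  have hcomp : ∀ k m : ℤ,
      (backshift k : (ℤ → V) → ℤ → V) ∘ backshift m = backshift (k + m) := by
    intro k m
    funext x
    funext j
    simp only [Function.comp_apply, backshift]
    congr 1
    ring
  have hid : (backshift (0 : ℤ) : (ℤ → V) → ℤ → V) = id := by
    funext x j
    simp [backshift]
  have hinv : ν.map (backshift (-1)) = ν := by
    conv_lhs => rw [← hνshift]
    rw [Measure.map_map (hmb _) (hmb _), hcomp, show (-1 : ℤ) + 1 = 0 by ring, hid,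
      Measure.map_id]
  have hmapn : ∀ n : ℕ, ν.map (backshift (-(n : ℤ))) = ν := by
    intro n
    induction n with
    | zero => simpa [hid] using (Measure.map_id : ν.map id = ν)
    | succ k ih =>
      have hcast : (-(↑(k + 1) : ℤ)) = (-1) + (-(k : ℤ)) := by push_cast; ring
      rw [hcast, ← hcomp, ← Measure.map_map (hmb _) (hmb _), ih, hinv]
  -- equality of measures of the pieces
  have hAC : ∀ n : ℕ, ν (Aset V n) = ν (Cset V n) := by
    intro n
    have h1 : ν (Aset V n) =
        ν ((backshift (-((n : ℤ) + 1)) : (ℤ → V) → ℤ → V) ⁻¹' (Cset V n)) := by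
      rw [preimage_Cset]
    have h2 : (ν.map (backshift (-((n : ℤ) + 1)))) (Cset V n) =
        ν ((backshift (-((n : ℤ) + 1)) : (ℤ → V) → ℤ → V) ⁻¹' (Cset V n)) :=
      Measure.map_apply (hmb _) (measurableSet_Cset n)
    have h3 : ν.map (backshift (-((n : ℤ) + 1))) = ν := by
      have := hmapn (n + 1)
      rwa [show (-(↑(n + 1) : ℤ)) = -((n : ℤ) + 1) by push_cast; ring] at this
    rw [h1, ← h2, h3]
  -- equality of the union measures
  have hkey : ν ((⋃ n, Aset V n)) = ν ((⋃ n, Cset V n)) := by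
    rw [measure_iUnion disjoint_Aset (fun n => measurableSet_Aset n),
      measure_iUnion disjoint_Cset (fun n => measurableSet_Cset n)]
    exact tsum_congr hAC
  -- transfer to P via the law of Y
  set S : Set (ℤ → V) := {y : ℤ → V | 1 < ‖y 0‖} with hS
  set Tp : Set (ℤ → V) := {y : ℤ → V | ∃ j : ℤ, 1 ≤ j ∧ 1 < ‖y j‖} with hTp
  set Tm : Set (ℤ → V) := {y : ℤ → V | ∃ j : ℤ, j ≤ -1 ∧ 1 < ‖y j‖} with hTm
  have hTpm : MeasurableSet Tp := by
    have : Tp = ⋃ (j : ℤ), ⋃ (_ : 1 ≤ j), {y : ℤ → V | 1 < ‖y j‖} := by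
      ext y
      simp only [hTp, Set.mem_setOf_eq, Set.mem_iUnion]
      tauto
    rw [this]
    exact MeasurableSet.iUnion fun j => MeasurableSet.iUnion fun _ => measurableSet_norm_lt j
  have hTmm : MeasurableSet Tm := by
    have : Tm = ⋃ (j : ℤ), ⋃ (_ : j ≤ -1), {y : ℤ → V | 1 < ‖y j‖} := by
      ext y
      simp only [hTm, Set.mem_setOf_eq, Set.mem_iUnion]
      tauto
    rw [this]
    exact MeasurableSet.iUnion fun j => MeasurableSet.iUnion fun _ => measurableSet_norm_lt j
  have hPp : P {ω | ∃ j : ℤ, 1 ≤ j ∧ 1 < ‖Y ω j‖} = ν (Tp ∩ S) := by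
    have h1 : {ω | ∃ j : ℤ, 1 ≤ j ∧ 1 < ‖Y ω j‖} = Y ⁻¹' Tp := rfl
    rw [h1, ← Measure.map_apply hYmeas hTpm, hYlaw, Measure.restrict_apply hTpm]
  have hPm : P {ω | ∃ j : ℤ, j ≤ -1 ∧ 1 < ‖Y ω j‖} = ν (Tm ∩ S) := by
    have h1 : {ω | ∃ j : ℤ, j ≤ -1 ∧ 1 < ‖Y ω j‖} = Y ⁻¹' Tm := rfl
    rw [h1, ← Measure.map_apply hYmeas hTmm, hYlaw, Measure.restrict_apply hTmm]
  have hmain : P {ω | ∃ j : ℤ, 1 ≤ j ∧ 1 < ‖Y ω j‖}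
      = P {ω | ∃ j : ℤ, j ≤ -1 ∧ 1 < ‖Y ω j‖} := by
    rw [hPp, hPm, ← iUnion_Aset, ← iUnion_Cset, hkey]
  refine ⟨?_, hmain⟩
  -- complements
  have hc1 : {ω | ∀ j : ℤ, 1 ≤ j → ‖Y ω j‖ ≤ 1} = (Y ⁻¹' Tp)ᶜ := by
    ext ω
    simp only [Set.mem_setOf_eq, Set.mem_compl_iff, Set.mem_preimage, hTp, not_exists, not_and,
      not_lt]
  have hc2 : {ω | ∀ j : ℤ, j ≤ -1 → ‖Y ω j‖ ≤ 1} = (Y ⁻¹' Tm)ᶜ := by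
    ext ω
    simp only [Set.mem_setOf_eq, Set.mem_compl_iff, Set.mem_preimage, hTm, not_exists, not_and,
      not_lt]
  rw [hc1, hc2, prob_compl_eq_one_sub (hYmeas hTpm), prob_compl_eq_one_sub (hYmeas hTmm)]
  have hmain' : P (Y ⁻¹' Tp) = P (Y ⁻¹' Tm) := hmain
  rw [hmain']
end
end

section
/- Assume P(lim_{|k|→∞} ‖Y_k‖ = 0) = 1. Then for every shift invariant nonnegative measurable functional H on E (i.e., H(Bx) = H(x) for all x), ϑ · E[H(Q)] = E[H(Θ) · 1{I(Θ) = 0}]. -/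
open MeasureTheory ProbabilityTheory Set Filter
open scoped ENNReal NNReal Topology

noncomputable section

/-- `InfargmaxAt x j` is the event `I(x) = j` for the infargmax functional `I`:
the first time the supremum of the norms is achieved is `j`, i.e.
`sup_{i<j} ‖x_i‖ < ‖x_j‖` and `sup_{i>j} ‖x_i‖ ≤ ‖x_j‖`.  (`I(x) ∈ ℤ` is then
expressed as `∃ j, InfargmaxAt x j`.) -/
def InfargmaxAt {V : Type*} [NormedAddCommGroup V] (x : ℤ → V) (j : ℤ) : Prop :=
  (⨆ i : {i : ℤ // i < j}, (‖x i.1‖₊ : ℝ≥0∞)) < (‖x j‖₊ : ℝ≥0∞) ∧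
    (⨆ i : {i : ℤ // j < i}, (‖x i.1‖₊ : ℝ≥0∞)) ≤ (‖x j‖₊ : ℝ≥0∞)

set_option linter.unusedSectionVars false

namespace S11

variable {V : Type*} [NormedAddCommGroup V]

lemma en_le {a b : V} : (‖a‖₊ : ℝ≥0∞) ≤ (‖b‖₊ : ℝ≥0∞) ↔ ‖a‖ ≤ ‖b‖ := by
  rw [ENNReal.coe_le_coe, ← NNReal.coe_le_coe, coe_nnnorm, coe_nnnorm]

lemma en_lt {a b : V} : (‖a‖₊ : ℝ≥0∞) < (‖b‖₊ : ℝ≥0∞) ↔ ‖a‖ < ‖b‖ := by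
  rw [ENNReal.coe_lt_coe, ← NNReal.coe_lt_coe, coe_nnnorm, coe_nnnorm]

lemma one_lt_en {a : V} : (1 : ℝ≥0∞) < (‖a‖₊ : ℝ≥0∞) ↔ 1 < ‖a‖ := by
  rw [show (1 : ℝ≥0∞) = ((1 : ℝ≥0) : ℝ≥0∞) from rfl, ENNReal.coe_lt_coe,
    ← NNReal.coe_lt_coe, coe_nnnorm, NNReal.coe_one]

lemma backshift_apply {k : ℤ} {x : ℤ → V} {j : ℤ} : backshift k x j = x (j - k) := rfl

lemma backshift_backshift (a b : ℤ) (x : ℤ → V) :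
    backshift a (backshift b x) = backshift (a + b) x := by
  funext j; simp [backshift, sub_sub]

lemma backshift_zero (x : ℤ → V) : backshift 0 x = x := by
  funext j; simp [backshift]

lemma measurable_backshift [MeasurableSpace V] (k : ℤ) :
    Measurable (backshift k : (ℤ → V) → ℤ → V) :=
  measurable_pi_lambda _ fun j => measurable_pi_apply (j - k)

/-- extension of one-step shift invariance of a function to all integer shifts -/
lemma shiftInv_all {β : Type*} {G : (ℤ → V) → β} (h1 : ∀ x, G (backshift 1 x) = G x) :
    ∀ (k : ℤ) (x : ℤ → V), G (backshift k x) = G x := by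
  have hm1 : ∀ x, G (backshift (-1) x) = G x := by
    intro x
    have := h1 (backshift (-1) x)
    rw [backshift_backshift, add_neg_cancel, backshift_zero] at this
    exact this.symm
  intro k
  induction k using Int.induction_on with
  | zero => intro x; rw [backshift_zero]
  | succ n ih =>
      intro x
      have : backshift (n + 1) x = backshift n (backshift 1 x) := by
        rw [backshift_backshift]
      rw [this, ih (backshift 1 x)]
      exact h1 x
  | pred n ih =>
      intro x
      have : backshift (-n - 1) x = backshift (-n) (backshift (-1) x) := by
        rw [backshift_backshift, show (-(n:ℤ) + -1) = -n - 1 by ring]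
      rw [this, ih (backshift (-1) x)]
      exact hm1 x

lemma map_backshift_eq [MeasurableSpace V] {ν : Measure (ℤ → V)}
    (h : ν.map (backshift 1) = ν) (k : ℤ) : ν.map (backshift k) = ν := by
  have comp : ∀ a b : ℤ, (backshift a ∘ backshift b : (ℤ → V) → ℤ → V) = backshift (a + b) := by
    intro a b; funext x; exact backshift_backshift a b x
  have hm1 : ν.map (backshift (-1)) = ν := by
    calc ν.map (backshift (-1)) = (ν.map (backshift 1)).map (backshift (-1)) := by rw [h]
    _ = ν.map (backshift (-1) ∘ backshift 1) :=
        Measure.map_map (measurable_backshift _) (measurable_backshift _)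
    _ = ν.map (backshift 0) := by rw [comp, show ((-1:ℤ) + 1) = 0 by ring]
    _ = ν := by
        have : (backshift 0 : (ℤ → V) → ℤ → V) = id := funext backshift_zero
        rw [this, Measure.map_id]
  induction k using Int.induction_on with
  | zero =>
      have : (backshift 0 : (ℤ → V) → ℤ → V) = id := funext backshift_zero
      rw [this, Measure.map_id]
  | succ n ih =>
      calc ν.map (backshift (n + 1)) = ν.map (backshift 1 ∘ backshift n) := by
            rw [comp, show ((1:ℤ) + n) = n + 1 by ring]
      _ = (ν.map (backshift n)).map (backshift 1) :=
          (Measure.map_map (measurable_backshift _) (measurable_backshift _)).symm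
      _ = ν := by rw [ih, h]
  | pred n ih =>
      calc ν.map (backshift (-n - 1)) = ν.map (backshift (-1) ∘ backshift (-n)) := by
            rw [comp, show ((-1:ℤ) + -n) = -n - 1 by ring]
      _ = (ν.map (backshift (-n))).map (backshift (-1)) :=
          (Measure.map_map (measurable_backshift _) (measurable_backshift _)).symm
      _ = ν := by rw [ih, hm1]


lemma norm_le_of_infargmax {x : ℤ → V} {j : ℤ} (h : InfargmaxAt x j) (i : ℤ) :
    ‖x i‖ ≤ ‖x j‖ := by
  rcases lt_trichotomy i j with hij | rfl | hij
  · refine en_le.1 (le_of_lt (lt_of_le_of_lt ?_ h.1))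
    exact le_iSup (fun i : {i : ℤ // i < j} => (‖x i.1‖₊ : ℝ≥0∞)) ⟨i, hij⟩
  · exact le_refl _
  · refine en_le.1 (le_trans ?_ h.2)
    exact le_iSup (fun i : {i : ℤ // j < i} => (‖x i.1‖₊ : ℝ≥0∞)) ⟨i, hij⟩

lemma infargmax_unique {x : ℤ → V} {j j' : ℤ} (h : InfargmaxAt x j)
    (h' : InfargmaxAt x j') : j = j' := by
  rcases lt_trichotomy j j' with hjj | hjj | hjj
  · exfalso
    have h1 : (‖x j‖₊ : ℝ≥0∞) < (‖x j'‖₊ : ℝ≥0∞) :=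
      lt_of_le_of_lt (le_iSup (fun i : {i : ℤ // i < j'} => (‖x i.1‖₊ : ℝ≥0∞)) ⟨j, hjj⟩) h'.1
    exact absurd (norm_le_of_infargmax h j') (not_le.2 (en_lt.1 h1))
  · exact hjj
  · exfalso
    have h1 : (‖x j'‖₊ : ℝ≥0∞) < (‖x j‖₊ : ℝ≥0∞) :=
      lt_of_le_of_lt (le_iSup (fun i : {i : ℤ // i < j} => (‖x i.1‖₊ : ℝ≥0∞)) ⟨j', hjj⟩) h.1
    exact absurd (norm_le_of_infargmax h' j) (not_le.2 (en_lt.1 h1))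

lemma infargmax_backshift {k : ℤ} {x : ℤ → V} {j : ℤ} :
    InfargmaxAt (backshift k x) j ↔ InfargmaxAt x (j - k) := by
  have e1 : (⨆ i : {i : ℤ // i < j}, (‖backshift k x i.1‖₊ : ℝ≥0∞))
      = ⨆ i : {i : ℤ // i < j - k}, (‖x i.1‖₊ : ℝ≥0∞) := by
    apply le_antisymm
    · exact iSup_le fun i => le_iSup (fun i : {i : ℤ // i < j - k} =>
        (‖x i.1‖₊ : ℝ≥0∞)) ⟨i.1 - k, by omega⟩
    · refine iSup_le fun i => ?_
      have : (‖x i.1‖₊ : ℝ≥0∞) = (‖backshift k x (i.1 + k)‖₊ : ℝ≥0∞) := by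
        simp [backshift]
      rw [this]
      exact le_iSup (fun i : {i : ℤ // i < j} => (‖backshift k x i.1‖₊ : ℝ≥0∞))
        ⟨i.1 + k, by omega⟩
  have e2 : (⨆ i : {i : ℤ // j < i}, (‖backshift k x i.1‖₊ : ℝ≥0∞))
      = ⨆ i : {i : ℤ // j - k < i}, (‖x i.1‖₊ : ℝ≥0∞) := by
    apply le_antisymm
    · exact iSup_le fun i => le_iSup (fun i : {i : ℤ // j - k < i} =>
        (‖x i.1‖₊ : ℝ≥0∞)) ⟨i.1 - k, by omega⟩
    · refine iSup_le fun i => ?_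
      have : (‖x i.1‖₊ : ℝ≥0∞) = (‖backshift k x (i.1 + k)‖₊ : ℝ≥0∞) := by
        simp [backshift]
      rw [this]
      exact le_iSup (fun i : {i : ℤ // j < i} => (‖backshift k x i.1‖₊ : ℝ≥0∞))
        ⟨i.1 + k, by omega⟩
  have e3 : (‖backshift k x j‖₊ : ℝ≥0∞) = (‖x (j - k)‖₊ : ℝ≥0∞) := rfl
  unfold InfargmaxAt
  rw [e1, e2, e3]

lemma infargmax_smul [NormedSpace ℝ V] {c : ℝ} (hc : c ≠ 0) {x : ℤ → V} {j : ℤ} :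
    InfargmaxAt (c • x) j ↔ InfargmaxAt x j := by
  have hcoord : ∀ i : ℤ, (‖(c • x) i‖₊ : ℝ≥0∞) = (‖c‖₊ : ℝ≥0∞) * (‖x i‖₊ : ℝ≥0∞) := by
    intro i
    rw [Pi.smul_apply, nnnorm_smul, ENNReal.coe_mul]
  have ha0 : (‖c‖₊ : ℝ≥0∞) ≠ 0 := by
    simp [hc]
  have hat : (‖c‖₊ : ℝ≥0∞) ≠ ⊤ := ENNReal.coe_ne_top
  have hs1 : (⨆ i : {i : ℤ // i < j}, (‖(c • x) i.1‖₊ : ℝ≥0∞))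
      = (‖c‖₊ : ℝ≥0∞) * ⨆ i : {i : ℤ // i < j}, (‖x i.1‖₊ : ℝ≥0∞) := by
    simp_rw [hcoord]
    exact (ENNReal.mul_iSup _ _).symm
  have hs2 : (⨆ i : {i : ℤ // j < i}, (‖(c • x) i.1‖₊ : ℝ≥0∞))
      = (‖c‖₊ : ℝ≥0∞) * ⨆ i : {i : ℤ // j < i}, (‖x i.1‖₊ : ℝ≥0∞) := by
    simp_rw [hcoord]
    exact (ENNReal.mul_iSup _ _).symm
  unfold InfargmaxAt
  rw [hs1, hs2, hcoord j, ENNReal.mul_lt_mul_iff_right ha0 hat,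
    ENNReal.mul_le_mul_iff_right ha0 hat]

lemma ciSup_norm_eq {x : ℤ → V} {j : ℤ} (h : InfargmaxAt x j) :
    (⨆ i : ℤ, ‖x i‖) = ‖x j‖ := by
  apply le_antisymm
  · exact ciSup_le fun i => norm_le_of_infargmax h i
  · refine le_ciSup (f := fun i : ℤ => ‖x i‖) ⟨‖x j‖, ?_⟩ j
    rintro _ ⟨i, rfl⟩
    exact norm_le_of_infargmax h i

section Meas
variable [MeasurableSpace V] [OpensMeasurableSpace V]

lemma measurable_en (i : ℤ) : Measurable fun x : ℤ → V => (‖x i‖₊ : ℝ≥0∞) :=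
  measurable_coe_nnreal_ennreal.comp (measurable_pi_apply i).nnnorm

lemma measurable_norm_coord (i : ℤ) : Measurable fun x : ℤ → V => ‖x i‖ :=
  (measurable_pi_apply i).norm

lemma measurableSet_infargmax (j : ℤ) :
    MeasurableSet {x : ℤ → V | InfargmaxAt x j} := by
  have h1 : Measurable fun x : ℤ → V => ⨆ i : {i : ℤ // i < j}, (‖x i.1‖₊ : ℝ≥0∞) :=
    Measurable.iSup fun i => measurable_en i.1
  have h2 : Measurable fun x : ℤ → V => ⨆ i : {i : ℤ // j < i}, (‖x i.1‖₊ : ℝ≥0∞) :=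
    Measurable.iSup fun i => measurable_en i.1
  exact (measurableSet_lt h1 (measurable_en j)).inter (measurableSet_le (α := ℝ≥0∞) h2 (measurable_en j))

end Meas

/-- The regularity property: the sequence of norms tends to `0` along cofinite. -/
def Reg (x : ℤ → V) : Prop := Tendsto (fun k : ℤ => ‖x k‖) cofinite (𝓝 0)

lemma finite_exc {x : ℤ → V} (hx : Reg x) : {i : ℤ | 1 < ‖x i‖}.Finite := by
  have h := hx (Iio_mem_nhds (by norm_num : (0:ℝ) < 1))
  rw [Filter.mem_map, Filter.mem_cofinite] at h
  exact h.subset fun i hi => by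
    simp only [mem_setOf_eq] at hi
    simp only [mem_compl_iff, mem_preimage, mem_Iio, not_lt]
    linarith

lemma reg_backshift (m : ℤ) (x : ℤ → V) : Reg (backshift m x) ↔ Reg x := by
  have aux : ∀ (m : ℤ) (x : ℤ → V), Reg x → Reg (backshift m x) := by
    intro m x h
    have hinj : Function.Injective (fun k : ℤ => k - m) := fun a b hab => by
      simpa using congrArg (· + m) hab
    exact h.comp hinj.tendsto_cofinite
  constructor
  · intro h
    have := aux (-m) _ h
    rwa [backshift_backshift, neg_add_cancel, backshift_zero] at this
  · exact aux m x

lemma measurableSet_reg [MeasurableSpace V] [OpensMeasurableSpace V] :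
    MeasurableSet {x : ℤ → V | Reg x} := by
  have heq : {x : ℤ → V | Reg x}
      = ⋂ n : ℕ, ⋃ F : Finset ℤ, {x : ℤ → V | ∀ k : ℤ, k ∉ F → ‖x k‖ < 1 / (n + 1)} := by
    ext x
    simp only [mem_setOf_eq, mem_iInter, mem_iUnion]
    constructor
    · intro hx n
      have hpos : (0:ℝ) < 1 / (n + 1) := by positivity
      have h := hx (Iio_mem_nhds hpos)
      rw [Filter.mem_map, Filter.mem_cofinite] at h
      refine ⟨h.toFinset, fun k hk => ?_⟩
      by_contra hcon
      exact hk (h.mem_toFinset.2 (by simpa using hcon))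
    · intro hx
      rw [Reg, NormedAddCommGroup.tendsto_nhds_zero]
      intro ε hε
      obtain ⟨n, hn⟩ := exists_nat_one_div_lt hε
      obtain ⟨F, hF⟩ := hx n
      rw [Filter.eventually_cofinite]
      refine (F.finite_toSet.subset ?_)
      intro k hk
      simp only [mem_setOf_eq, not_lt] at hk
      by_contra hkF
      have := hF k hkF
      have h2 : ‖x k‖ < ε := lt_trans this (by exact_mod_cast hn)
      rw [norm_norm] at hk
      linarith
  rw [heq]
  refine MeasurableSet.iInter fun n => MeasurableSet.iUnion fun F => ?_
  have : {x : ℤ → V | ∀ k : ℤ, k ∉ F → ‖x k‖ < 1 / (n + 1)}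
      = ⋂ k : ℤ, ⋂ (_ : k ∉ F), {x : ℤ → V | ‖x k‖ < 1 / (n + 1)} := by
    ext x; simp
  rw [this]
  exact MeasurableSet.iInter fun k => MeasurableSet.iInter fun _ =>
    measurableSet_lt (measurable_norm_coord k) measurable_const


lemma exists_infargmax {x : ℤ → V} (hx : Reg x) {m : ℤ} (hm : 1 < ‖x m‖) :
    ∃ j, InfargmaxAt x j := by
  classical
  have hF : {i : ℤ | 1 < ‖x i‖}.Finite := finite_exc hx
  set Fs := hF.toFinset with hFs
  have hmF : m ∈ Fs := hF.mem_toFinset.2 hm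
  obtain ⟨j₀, hj₀, hmax⟩ := Fs.exists_max_image (fun i => ‖x i‖) ⟨m, hmF⟩
  set M := ‖x j₀‖ with hM
  have hM1 : 1 < M := hF.mem_toFinset.1 hj₀
  have hglob : ∀ i, ‖x i‖ ≤ M := by
    intro i
    by_cases hi : i ∈ Fs
    · exact hmax i hi
    · have h1 : ¬ 1 < ‖x i‖ := fun h => hi (hF.mem_toFinset.2 h)
      linarith [not_lt.1 h1]
  set G := Fs.filter (fun i => ‖x i‖ = M) with hG
  have hGne : G.Nonempty := ⟨j₀, Finset.mem_filter.2 ⟨hj₀, rfl⟩⟩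
  set j := G.min' hGne with hj
  have hjG : j ∈ G := G.min'_mem hGne
  have hxj : ‖x j‖ = M := (Finset.mem_filter.1 hjG).2
  set T := Fs.filter (fun i => i < j) with hT
  set s : Finset ℝ := insert (1:ℝ) (T.image fun i => ‖x i‖) with hs
  have hsne : s.Nonempty := ⟨1, Finset.mem_insert_self _ _⟩
  set c : ℝ := s.max' hsne with hc
  have hub : ∀ i : ℤ, i < j → ‖x i‖ ≤ c := by
    intro i hij
    by_cases hi : i ∈ Fs
    · exact s.le_max' _ (Finset.mem_insert_of_mem
        (Finset.mem_image_of_mem _ (Finset.mem_filter.2 ⟨hi, hij⟩)))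
    · have h1 : ¬ 1 < ‖x i‖ := fun h => hi (hF.mem_toFinset.2 h)
      exact le_trans (not_lt.1 h1) (s.le_max' _ (Finset.mem_insert_self _ _))
  have hcM : c < M := by
    rw [hc, Finset.max'_lt_iff]
    intro b hb
    rcases Finset.mem_insert.1 hb with rfl | hb
    · exact hM1
    · obtain ⟨i, hiT, rfl⟩ := Finset.mem_image.1 hb
      obtain ⟨hiF, hij⟩ := Finset.mem_filter.1 hiT
      rcases lt_or_eq_of_le (hglob i) with h | h
      · exact h
      · exfalso
        have : j ≤ i := G.min'_le i (Finset.mem_filter.2 ⟨hiF, h⟩)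
        omega
  refine ⟨j, ?_, ?_⟩
  · have hle : (⨆ i : {i : ℤ // i < j}, (‖x i.1‖₊ : ℝ≥0∞)) ≤ ENNReal.ofReal c := by
      refine iSup_le fun i => ?_
      rw [← enorm_eq_nnnorm, ← ofReal_norm]
      exact ENNReal.ofReal_le_ofReal (hub i.1 i.2)
    have hlt : ENNReal.ofReal c < ENNReal.ofReal M :=
      (ENNReal.ofReal_lt_ofReal_iff (by linarith)).2 hcM
    have : ENNReal.ofReal M = (‖x j‖₊ : ℝ≥0∞) := by
      rw [← hxj, ofReal_norm, enorm_eq_nnnorm]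
    exact this ▸ lt_of_le_of_lt hle hlt
  · refine iSup_le fun i => en_le.2 ?_
    rw [hxj]
    exact hglob i.1


section Decomp
variable [MeasurableSpace V] [OpensMeasurableSpace V]

lemma measurableSet_exc (m : ℤ) : MeasurableSet {x : ℤ → V | 1 < ‖x m‖} :=
  measurableSet_lt measurable_const (measurable_norm_coord m)

lemma measurableSet_before (m : ℤ) :
    MeasurableSet {x : ℤ → V | ∀ j < m, ‖x j‖ ≤ 1} := by
  have : {x : ℤ → V | ∀ j < m, ‖x j‖ ≤ 1}
      = ⋂ j : ℤ, ⋂ (_ : j < m), {x : ℤ → V | ‖x j‖ ≤ 1} := by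
    ext x; simp
  rw [this]
  exact MeasurableSet.iInter fun j => MeasurableSet.iInter fun _ =>
    measurableSet_le (measurable_norm_coord j) measurable_const

lemma measurableSet_after (m : ℤ) :
    MeasurableSet {x : ℤ → V | ∀ j, m < j → ‖x j‖ ≤ 1} := by
  have : {x : ℤ → V | ∀ j, m < j → ‖x j‖ ≤ 1}
      = ⋂ j : ℤ, ⋂ (_ : m < j), {x : ℤ → V | ‖x j‖ ≤ 1} := by
    ext x; simp
  rw [this]
  exact MeasurableSet.iInter fun j => MeasurableSet.iInter fun _ =>
    measurableSet_le (measurable_norm_coord j) measurable_const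

variable {ν : Measure (ℤ → V)}

lemma lint_shift (hinv : ∀ k : ℤ, ν.map (backshift k) = ν) (k : ℤ)
    {g : (ℤ → V) → ℝ≥0∞} (hg : Measurable g) :
    ∫⁻ x, g (backshift k x) ∂ν = ∫⁻ x, g x ∂ν := by
  rw [← lintegral_map hg (measurable_backshift k), hinv k]

lemma firstExc_lintegral (hinv : ∀ k : ℤ, ν.map (backshift k) = ν)
    (hnull : ∀ m : ℤ, ν ({x : ℤ → V | ¬ Reg x} ∩ {x | 1 < ‖x m‖}) = 0)
    (G : (ℤ → V) → ℝ≥0∞) (hG : Measurable G)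
    (hGs : ∀ (k : ℤ) (x : ℤ → V), G (backshift k x) = G x) :
    ∫⁻ x, ({x : ℤ → V | 1 < ‖x 0‖ ∧ ∀ j < (0:ℤ), ‖x j‖ ≤ 1}).indicator G x ∂ν
      = ∫⁻ x, ({x : ℤ → V | InfargmaxAt x 0 ∧ 1 < ‖x 0‖}).indicator G x ∂ν := by
  classical
  set N : Set (ℤ → V) := {x | ¬ Reg x} ∩ ⋃ m : ℤ, {x | 1 < ‖x m‖} with hN
  have hNnull : ν N = 0 := by
    rw [hN, inter_iUnion]
    exact measure_iUnion_null fun m => hnull m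
  have haeN : ∀ᵐ x ∂ν, x ∉ N := measure_eq_zero_iff_ae_notMem.1 hNnull
  set E0 : Set (ℤ → V) := {x | 1 < ‖x 0‖ ∧ ∀ j < (0:ℤ), ‖x j‖ ≤ 1} with hE0
  set RS : Set (ℤ → V) := {x | InfargmaxAt x 0 ∧ 1 < ‖x 0‖} with hRS
  set A : ℕ → Set (ℤ → V) := fun k =>
    {x | (1 < ‖x 0‖ ∧ ∀ j < (0:ℤ), ‖x j‖ ≤ 1) ∧ InfargmaxAt x (k : ℤ)} with hA
  set A' : ℕ → Set (ℤ → V) := fun k =>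
    {x | (1 < ‖x (-(k:ℤ))‖ ∧ ∀ j < -(k:ℤ), ‖x j‖ ≤ 1) ∧ InfargmaxAt x 0} with hA'
  have hAm : ∀ k : ℕ, MeasurableSet (A k) := fun k =>
    ((measurableSet_exc 0).inter (measurableSet_before 0)).inter (measurableSet_infargmax _)
  have hA'm : ∀ k : ℕ, MeasurableSet (A' k) := fun k =>
    ((measurableSet_exc _).inter (measurableSet_before _)).inter (measurableSet_infargmax _)
  -- Step 1: pointwise decomposition of the first-exceedance indicator by infargmax value
  have step1 : ∀ x ∉ N, E0.indicator G x = ∑' k : ℕ, (A k).indicator G x := by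
    intro x hxN
    by_cases hx : x ∈ E0
    · have hreg : Reg x := by
        by_contra hreg
        exact hxN ⟨hreg, mem_iUnion.2 ⟨0, hx.1⟩⟩
      obtain ⟨j, hj⟩ := exists_infargmax hreg hx.1
      have hj0 : 0 ≤ j := by
        by_contra h
        push_neg at h
        have h1 := hx.2 j h
        have h2 := norm_le_of_infargmax hj 0
        have h3 := hx.1
        linarith
      rw [Set.indicator_of_mem hx, tsum_eq_single j.toNat ?_]
      · rw [Set.indicator_of_mem]
        exact ⟨hx, by rwa [Int.toNat_of_nonneg hj0]⟩
      · intro k hk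
        rw [Set.indicator_of_notMem]
        rintro ⟨-, hIk⟩
        have hkj := infargmax_unique hIk hj
        exact hk (by omega)
    · rw [Set.indicator_of_notMem hx]
      have hz : ∀ k : ℕ, (A k).indicator G x = 0 := fun k =>
        Set.indicator_of_notMem (fun hmem => hx hmem.1) _
      rw [tsum_congr hz, tsum_zero]
  -- Step 4: pointwise decomposition of the infargmax indicator by first-exceedance position
  have step4 : ∀ x ∉ N, RS.indicator G x = ∑' k : ℕ, (A' k).indicator G x := by
    intro x hxN
    by_cases hI : InfargmaxAt x 0
    · by_cases hx0 : 1 < ‖x 0‖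
      · have hreg : Reg x := by
          by_contra hreg
          exact hxN ⟨hreg, mem_iUnion.2 ⟨0, hx0⟩⟩
        have hF := finite_exc hreg
        have h0F : (0:ℤ) ∈ hF.toFinset := hF.mem_toFinset.2 hx0
        have hFne : hF.toFinset.Nonempty := ⟨0, h0F⟩
        set m := hF.toFinset.min' hFne with hm
        have hmF : m ∈ hF.toFinset := hF.toFinset.min'_mem hFne
        have hm1 : 1 < ‖x m‖ := hF.mem_toFinset.1 hmF
        have hmle : m ≤ 0 := hF.toFinset.min'_le 0 h0F
        have hmmin : ∀ i < m, ‖x i‖ ≤ 1 := by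
          intro i hi
          by_contra h
          push_neg at h
          have := hF.toFinset.min'_le i (hF.mem_toFinset.2 h)
          omega
        rw [Set.indicator_of_mem (show x ∈ RS from ⟨hI, hx0⟩),
          tsum_eq_single (-m).toNat ?_]
        · rw [Set.indicator_of_mem]
          refine ⟨⟨?_, ?_⟩, hI⟩
          · rwa [show -(((-m).toNat : ℕ) : ℤ) = m by omega]
          · rwa [show -(((-m).toNat : ℕ) : ℤ) = m by omega]
        · intro k hk
          rw [Set.indicator_of_notMem]
          rintro ⟨⟨hk1, hk2⟩, -⟩
          have hmlek : m ≤ -(k:ℤ) := hF.toFinset.min'_le _ (hF.mem_toFinset.2 hk1)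
          rcases lt_or_eq_of_le hmlek with h | h
          · exact absurd (hk2 m h) (by linarith)
          · exact hk (by omega)
      · rw [Set.indicator_of_notMem (fun hmem => hx0 hmem.2)]
        have hz : ∀ k : ℕ, (A' k).indicator G x = 0 := by
          intro k
          refine Set.indicator_of_notMem ?_ _
          rintro ⟨⟨hk1, -⟩, -⟩
          exact hx0 (lt_of_lt_of_le hk1 (norm_le_of_infargmax hI _))
        rw [tsum_congr hz, tsum_zero]
    · rw [Set.indicator_of_notMem (fun hmem => hI hmem.1)]
      have hz : ∀ k : ℕ, (A' k).indicator G x = 0 := fun k =>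
        Set.indicator_of_notMem (fun hmem => hI hmem.2) _
      rw [tsum_congr hz, tsum_zero]
  -- Step shift: each summand is shift-equivalent
  have hshift : ∀ k : ℕ, ∫⁻ x, (A k).indicator G x ∂ν = ∫⁻ x, (A' k).indicator G x ∂ν := by
    intro k
    have hpt : ∀ x : ℤ → V, (A k).indicator G (backshift (k:ℤ) x) = (A' k).indicator G x := by
      intro x
      have hmem : backshift (k:ℤ) x ∈ A k ↔ x ∈ A' k := by
        constructor
        · rintro ⟨⟨h1, h2⟩, h3⟩
          refine ⟨⟨?_, ?_⟩, ?_⟩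
          · rwa [show (-(k:ℤ)) = 0 - (k:ℤ) by ring]
          · intro j hj
            have := h2 (j + k) (by omega)
            rw [backshift_apply] at this
            rwa [show j + (k:ℤ) - k = j by ring] at this
          · have := infargmax_backshift.1 h3
            rwa [sub_self] at this
        · rintro ⟨⟨h1, h2⟩, h3⟩
          refine ⟨⟨?_, ?_⟩, ?_⟩
          · show 1 < ‖x (0 - (k:ℤ))‖
            rwa [show (0:ℤ) - k = -(k:ℤ) by ring]
          · intro j hj
            show ‖x (j - (k:ℤ))‖ ≤ 1
            exact h2 (j - k) (by omega)
          · rw [infargmax_backshift, sub_self]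
            exact h3
      by_cases hx : x ∈ A' k
      · rw [Set.indicator_of_mem (hmem.2 hx), Set.indicator_of_mem hx, hGs]
      · rw [Set.indicator_of_notMem (fun h => hx (hmem.1 h)), Set.indicator_of_notMem hx]
    calc ∫⁻ x, (A k).indicator G x ∂ν
        = ∫⁻ x, (A k).indicator G (backshift (k:ℤ) x) ∂ν :=
          (lint_shift hinv _ (hG.indicator (hAm k))).symm
      _ = ∫⁻ x, (A' k).indicator G x ∂ν := lintegral_congr hpt
  calc ∫⁻ x, E0.indicator G x ∂ν
      = ∫⁻ x, ∑' k : ℕ, (A k).indicator G x ∂ν := by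
        refine lintegral_congr_ae ?_
        filter_upwards [haeN] with x hx using step1 x hx
    _ = ∑' k : ℕ, ∫⁻ x, (A k).indicator G x ∂ν :=
        lintegral_tsum fun k => (hG.indicator (hAm k)).aemeasurable
    _ = ∑' k : ℕ, ∫⁻ x, (A' k).indicator G x ∂ν := tsum_congr hshift
    _ = ∫⁻ x, ∑' k : ℕ, (A' k).indicator G x ∂ν :=
        (lintegral_tsum fun k => (hG.indicator (hA'm k)).aemeasurable).symm
    _ = ∫⁻ x, RS.indicator G x ∂ν := by
        refine lintegral_congr_ae ?_
        filter_upwards [haeN] with x hx using (step4 x hx).symm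


lemma lastExc_lintegral (hinv : ∀ k : ℤ, ν.map (backshift k) = ν)
    (hnull : ∀ m : ℤ, ν ({x : ℤ → V | ¬ Reg x} ∩ {x | 1 < ‖x m‖}) = 0)
    (G : (ℤ → V) → ℝ≥0∞) (hG : Measurable G)
    (hGs : ∀ (k : ℤ) (x : ℤ → V), G (backshift k x) = G x) :
    ∫⁻ x, ({x : ℤ → V | 1 < ‖x 0‖ ∧ ∀ j : ℤ, 0 < j → ‖x j‖ ≤ 1}).indicator G x ∂ν
      = ∫⁻ x, ({x : ℤ → V | InfargmaxAt x 0 ∧ 1 < ‖x 0‖}).indicator G x ∂ν := by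
  classical
  set N : Set (ℤ → V) := {x | ¬ Reg x} ∩ ⋃ m : ℤ, {x | 1 < ‖x m‖} with hN
  have hNnull : ν N = 0 := by
    rw [hN, inter_iUnion]
    exact measure_iUnion_null fun m => hnull m
  have haeN : ∀ᵐ x ∂ν, x ∉ N := measure_eq_zero_iff_ae_notMem.1 hNnull
  set E0 : Set (ℤ → V) := {x | 1 < ‖x 0‖ ∧ ∀ j : ℤ, 0 < j → ‖x j‖ ≤ 1} with hE0
  set RS : Set (ℤ → V) := {x | InfargmaxAt x 0 ∧ 1 < ‖x 0‖} with hRS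
  set A : ℕ → Set (ℤ → V) := fun k =>
    {x | (1 < ‖x 0‖ ∧ ∀ j : ℤ, 0 < j → ‖x j‖ ≤ 1) ∧ InfargmaxAt x (-(k : ℤ))} with hA
  set A' : ℕ → Set (ℤ → V) := fun k =>
    {x | (1 < ‖x (k:ℤ)‖ ∧ ∀ j : ℤ, (k:ℤ) < j → ‖x j‖ ≤ 1) ∧ InfargmaxAt x 0} with hA'
  have hAm : ∀ k : ℕ, MeasurableSet (A k) := fun k =>
    ((measurableSet_exc 0).inter (measurableSet_after 0)).inter (measurableSet_infargmax _)
  have hA'm : ∀ k : ℕ, MeasurableSet (A' k) := fun k =>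
    ((measurableSet_exc _).inter (measurableSet_after _)).inter (measurableSet_infargmax _)
  have step1 : ∀ x ∉ N, E0.indicator G x = ∑' k : ℕ, (A k).indicator G x := by
    intro x hxN
    by_cases hx : x ∈ E0
    · have hreg : Reg x := by
        by_contra hreg
        exact hxN ⟨hreg, mem_iUnion.2 ⟨0, hx.1⟩⟩
      obtain ⟨j, hj⟩ := exists_infargmax hreg hx.1
      have hj0 : j ≤ 0 := by
        by_contra h
        push_neg at h
        have h1 := hx.2 j h
        have h2 := norm_le_of_infargmax hj 0
        have h3 := hx.1
        linarith
      rw [Set.indicator_of_mem hx, tsum_eq_single (-j).toNat ?_]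
      · rw [Set.indicator_of_mem]
        exact ⟨hx, by rwa [show -(((-j).toNat : ℕ) : ℤ) = j by omega]⟩
      · intro k hk
        rw [Set.indicator_of_notMem]
        rintro ⟨-, hIk⟩
        have hkj := infargmax_unique hIk hj
        exact hk (by omega)
    · rw [Set.indicator_of_notMem hx]
      have hz : ∀ k : ℕ, (A k).indicator G x = 0 := fun k =>
        Set.indicator_of_notMem (fun hmem => hx hmem.1) _
      rw [tsum_congr hz, tsum_zero]
  have step4 : ∀ x ∉ N, RS.indicator G x = ∑' k : ℕ, (A' k).indicator G x := by
    intro x hxN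
    by_cases hI : InfargmaxAt x 0
    · by_cases hx0 : 1 < ‖x 0‖
      · have hreg : Reg x := by
          by_contra hreg
          exact hxN ⟨hreg, mem_iUnion.2 ⟨0, hx0⟩⟩
        have hF := finite_exc hreg
        have h0F : (0:ℤ) ∈ hF.toFinset := hF.mem_toFinset.2 hx0
        have hFne : hF.toFinset.Nonempty := ⟨0, h0F⟩
        set m := hF.toFinset.max' hFne with hm
        have hmF : m ∈ hF.toFinset := hF.toFinset.max'_mem hFne
        have hm1 : 1 < ‖x m‖ := hF.mem_toFinset.1 hmF
        have hmle : 0 ≤ m := hF.toFinset.le_max' 0 h0F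
        have hmmax : ∀ i, m < i → ‖x i‖ ≤ 1 := by
          intro i hi
          by_contra h
          push_neg at h
          have := hF.toFinset.le_max' i (hF.mem_toFinset.2 h)
          omega
        rw [Set.indicator_of_mem (show x ∈ RS from ⟨hI, hx0⟩),
          tsum_eq_single m.toNat ?_]
        · rw [Set.indicator_of_mem]
          refine ⟨⟨?_, ?_⟩, hI⟩
          · rwa [show ((m.toNat : ℕ) : ℤ) = m by omega]
          · rwa [show ((m.toNat : ℕ) : ℤ) = m by omega]
        · intro k hk
          rw [Set.indicator_of_notMem]
          rintro ⟨⟨hk1, hk2⟩, -⟩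
          have hmlek : (k:ℤ) ≤ m := hF.toFinset.le_max' _ (hF.mem_toFinset.2 hk1)
          rcases lt_or_eq_of_le hmlek with h | h
          · exact absurd (hk2 m h) (by linarith)
          · exact hk (by omega)
      · rw [Set.indicator_of_notMem (fun hmem => hx0 hmem.2)]
        have hz : ∀ k : ℕ, (A' k).indicator G x = 0 := by
          intro k
          refine Set.indicator_of_notMem ?_ _
          rintro ⟨⟨hk1, -⟩, -⟩
          exact hx0 (lt_of_lt_of_le hk1 (norm_le_of_infargmax hI _))
        rw [tsum_congr hz, tsum_zero]
    · rw [Set.indicator_of_notMem (fun hmem => hI hmem.1)]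
      have hz : ∀ k : ℕ, (A' k).indicator G x = 0 := fun k =>
        Set.indicator_of_notMem (fun hmem => hI hmem.2) _
      rw [tsum_congr hz, tsum_zero]
  have hshift : ∀ k : ℕ, ∫⁻ x, (A k).indicator G x ∂ν = ∫⁻ x, (A' k).indicator G x ∂ν := by
    intro k
    have hpt : ∀ x : ℤ → V,
        (A k).indicator G (backshift (-(k:ℤ)) x) = (A' k).indicator G x := by
      intro x
      have hmem : backshift (-(k:ℤ)) x ∈ A k ↔ x ∈ A' k := by
        constructor
        · rintro ⟨⟨h1, h2⟩, h3⟩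
          refine ⟨⟨?_, ?_⟩, ?_⟩
          · rw [backshift_apply] at h1
            rwa [show (0:ℤ) - -(k:ℤ) = k by ring] at h1
          · intro j hj
            have := h2 (j - k) (by omega)
            rw [backshift_apply] at this
            rwa [show j - (k:ℤ) - -(k:ℤ) = j by ring] at this
          · have := infargmax_backshift.1 h3
            rwa [sub_neg_eq_add, neg_add_cancel] at this
        · rintro ⟨⟨h1, h2⟩, h3⟩
          refine ⟨⟨?_, ?_⟩, ?_⟩
          · show 1 < ‖x (0 - -(k:ℤ))‖
            rwa [show (0:ℤ) - -(k:ℤ) = k by ring]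
          · intro j hj
            show ‖x (j - -(k:ℤ))‖ ≤ 1
            rw [show j - -(k:ℤ) = j + k by ring]
            exact h2 (j + k) (by omega)
          · rw [infargmax_backshift, sub_neg_eq_add, neg_add_cancel]
            exact h3
      by_cases hx : x ∈ A' k
      · rw [Set.indicator_of_mem (hmem.2 hx), Set.indicator_of_mem hx, hGs]
      · rw [Set.indicator_of_notMem (fun h => hx (hmem.1 h)), Set.indicator_of_notMem hx]
    calc ∫⁻ x, (A k).indicator G x ∂ν
        = ∫⁻ x, (A k).indicator G (backshift (-(k:ℤ)) x) ∂ν :=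
          (lint_shift hinv _ (hG.indicator (hAm k))).symm
      _ = ∫⁻ x, (A' k).indicator G x ∂ν := lintegral_congr hpt
  calc ∫⁻ x, E0.indicator G x ∂ν
      = ∫⁻ x, ∑' k : ℕ, (A k).indicator G x ∂ν := by
        refine lintegral_congr_ae ?_
        filter_upwards [haeN] with x hx using step1 x hx
    _ = ∑' k : ℕ, ∫⁻ x, (A k).indicator G x ∂ν :=
        lintegral_tsum fun k => (hG.indicator (hAm k)).aemeasurable
    _ = ∑' k : ℕ, ∫⁻ x, (A' k).indicator G x ∂ν := tsum_congr hshift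
    _ = ∫⁻ x, ∑' k : ℕ, (A' k).indicator G x ∂ν :=
        (lintegral_tsum fun k => (hG.indicator (hA'm k)).aemeasurable).symm
    _ = ∫⁻ x, RS.indicator G x ∂ν := by
        refine lintegral_congr_ae ?_
        filter_upwards [haeN] with x hx using (step4 x hx).symm

end Decomp

lemma ciSup_norm_backshift (k : ℤ) (x : ℤ → V) :
    (⨆ j : ℤ, ‖backshift k x j‖) = ⨆ j : ℤ, ‖x j‖ := by
  have hr : Set.range (fun j : ℤ => ‖backshift k x j‖) = Set.range (fun j : ℤ => ‖x j‖) := by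
    ext r
    constructor
    · rintro ⟨j, rfl⟩
      exact ⟨j - k, rfl⟩
    · rintro ⟨j, rfl⟩
      refine ⟨j + k, ?_⟩
      show ‖x (j + k - k)‖ = ‖x j‖
      rw [add_sub_cancel_right]
  rw [iSup, iSup, hr]

end S11

/-- **The law of `Q` and the spectral tail process conditioned on `I(Θ) = 0`.**
If `P(lim_{|k|→∞} ‖Y_k‖ = 0) = 1`, then for every shift invariant nonnegative
measurable `H` on `E`, `ϑ · E[H(Q)] = E[H(Θ) 1{I(Θ) = 0}]`, where
`ϑ = P(sup_{j≥1} ‖Y_j‖ ≤ 1)`. -/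
theorem statement11
    -- `V` plays the role of `ℝ^d` (`d ≥ 1`) equipped with an arbitrary norm
    {V : Type*} [NormedAddCommGroup V] [NormedSpace ℝ V] [FiniteDimensional ℝ V]
    [Nontrivial V] [MeasurableSpace V] [BorelSpace V]
    (α : ℝ) (hα : 0 < α)
    -- the tail measure and its properties
    (ν : Measure (ℤ → V))
    (hν0 : ν {0} = 0)
    (hν1 : ν {y : ℤ → V | 1 < ‖y 0‖} = 1)
    (hνshift : ν.map (backshift 1) = ν)
    (hνhom : ∀ A : Set (ℤ → V), MeasurableSet A → ∀ c : ℝ, 0 < c →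
      ν ((fun x => c • x) '' A) = ENNReal.ofReal (c ^ (-α)) * ν A)
    -- the tail process `Y` and the spectral tail process `Θ`
    {Ω : Type*} [MeasurableSpace Ω] (P : Measure Ω) [IsProbabilityMeasure P]
    (Y : Ω → ℤ → V) (hYmeas : Measurable Y)
    (hYlaw : P.map Y = ν.restrict {y : ℤ → V | 1 < ‖y 0‖})
    (Θ : Ω → ℤ → V) (hΘdef : ∀ ω, Θ ω = ‖Y ω 0‖⁻¹ • Y ω)
    (hPareto : ∀ u : ℝ, 1 ≤ u → P {ω | u < ‖Y ω 0‖} = ENNReal.ofReal (u ^ (-α)))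
    (hindep : IndepFun (fun ω => ‖Y ω 0‖) Θ P)
    (hpolar : ∀ H : (ℤ → V) → ℝ≥0∞, Measurable H →
      ∫⁻ y in {y : ℤ → V | y 0 ≠ 0}, H y ∂ν
        = ∫⁻ r in Ioi (0 : ℝ),
            (∫⁻ ω, H (r • Θ ω) ∂P) * ENNReal.ofReal (α * r ^ (-α - 1)))
    -- `Q`: a random element (on a probability space `Ω'`) whose law is that of
    -- `Y/Y*`, `Y* = sup_{j∈ℤ} ‖Y_j‖`, conditionally on `{sup_{j≤−1} ‖Y_j‖ ≤ 1}`
    {Ω' : Type*} [MeasurableSpace Ω'] (P' : Measure Ω') [IsProbabilityMeasure P']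
    (Q : Ω' → ℤ → V) (hQmeas : Measurable Q)
    (hQlaw : P'.map Q
      = (ProbabilityTheory.cond P {ω | ∀ j : ℤ, j ≤ -1 → ‖Y ω j‖ ≤ 1}).map
          (fun ω => (⨆ j : ℤ, ‖Y ω j‖)⁻¹ • Y ω))
    -- the statement
    (hY0 : P {ω | Tendsto (fun k : ℤ => ‖Y ω k‖) cofinite (𝓝 0)} = 1)
    (H : (ℤ → V) → ℝ≥0∞) (hH : Measurable H)
    (hHshift : ∀ x, H (backshift 1 x) = H x) :
    P {ω | ∀ j : ℤ, 1 ≤ j → ‖Y ω j‖ ≤ 1} * ∫⁻ ω', H (Q ω') ∂P'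
      = ∫⁻ ω in {ω | InfargmaxAt (Θ ω) 0}, H (Θ ω) ∂P := by
  classical
  set S : Set (ℤ → V) := {y : ℤ → V | 1 < ‖y 0‖} with hSdef
  have hSm : MeasurableSet S := S11.measurableSet_exc 0
  -- the rescaling map
  set f : (ℤ → V) → (ℤ → V) := fun y => (⨆ j : ℤ, ‖y j‖)⁻¹ • y with hfdef
  have hsupm : Measurable fun y : ℤ → V => (⨆ j : ℤ, ‖y j‖)⁻¹ :=
    (Measurable.iSup fun i => S11.measurable_norm_coord i).inv
  have hfm : Measurable f := by
    refine measurable_pi_lambda _ fun j => ?_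
    exact hsupm.smul (measurable_pi_apply j)
  have hΘeq : Θ = fun ω => ‖Y ω 0‖⁻¹ • Y ω := funext hΘdef
  have hΘm : Measurable Θ := by
    rw [hΘeq]
    refine measurable_pi_lambda _ fun j => ?_
    exact (((measurable_pi_apply 0).comp hYmeas).norm.inv).smul
      ((measurable_pi_apply j).comp hYmeas)
  -- shift invariance of ν for all k
  have hinv : ∀ k : ℤ, ν.map (backshift k) = ν := S11.map_backshift_eq hνshift
  -- regularity
  have hregm : MeasurableSet {x : ℤ → V | S11.Reg x} := S11.measurableSet_reg
  have hYRegm : MeasurableSet {ω | S11.Reg (Y ω)} := hYmeas hregm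
  have hYregone : P {ω | S11.Reg (Y ω)} = 1 := hY0
  have hbad0 : ν ({x : ℤ → V | ¬ S11.Reg x} ∩ S) = 0 := by
    have h1 : ν ({x : ℤ → V | ¬ S11.Reg x} ∩ S) = (P.map Y) {x : ℤ → V | S11.Reg x}ᶜ := by
      rw [hYlaw, Measure.restrict_apply hregm.compl]
      rfl
    have h2 : Y ⁻¹' ({x : ℤ → V | S11.Reg x}ᶜ) = {ω | S11.Reg (Y ω)}ᶜ := rfl
    rw [h1, Measure.map_apply hYmeas hregm.compl, h2,
      measure_compl hYRegm (measure_ne_top P _), hYregone, measure_univ, tsub_self]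
  have hnull : ∀ m : ℤ, ν ({x : ℤ → V | ¬ S11.Reg x} ∩ {x | 1 < ‖x m‖}) = 0 := by
    intro m
    have hmeasSet : MeasurableSet ({x : ℤ → V | ¬ S11.Reg x} ∩ S) := hregm.compl.inter hSm
    have hpre : (backshift (-m)) ⁻¹' ({x : ℤ → V | ¬ S11.Reg x} ∩ S)
        = {x : ℤ → V | ¬ S11.Reg x} ∩ {x | 1 < ‖x m‖} := by
      ext x
      simp only [mem_preimage, mem_inter_iff, mem_setOf_eq]
      constructor
      · rintro ⟨h1, h2⟩
        refine ⟨fun hr => h1 ((S11.reg_backshift (-m) x).2 hr), ?_⟩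
        have h2' : 1 < ‖x (0 - -m)‖ := h2
        rwa [show (0:ℤ) - -m = m by ring] at h2'
      · rintro ⟨h1, h2⟩
        refine ⟨fun hr => h1 ((S11.reg_backshift (-m) x).1 hr), ?_⟩
        show 1 < ‖x (0 - -m)‖
        rwa [show (0:ℤ) - -m = m by ring]
    calc ν ({x : ℤ → V | ¬ S11.Reg x} ∩ {x | 1 < ‖x m‖})
        = ν ((backshift (-m)) ⁻¹' ({x : ℤ → V | ¬ S11.Reg x} ∩ S)) := by rw [hpre]
      _ = (ν.map (backshift (-m))) ({x : ℤ → V | ¬ S11.Reg x} ∩ S) :=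
          (Measure.map_apply (S11.measurable_backshift _) hmeasSet).symm
      _ = 0 := by rw [hinv]; exact hbad0
  -- the shift invariant functional G1 = H ∘ f
  set G1 : (ℤ → V) → ℝ≥0∞ := fun y => H (f y) with hG1def
  have hG1m : Measurable G1 := hH.comp hfm
  have hfshift : ∀ x : ℤ → V, f (backshift 1 x) = backshift 1 (f x) := by
    intro x
    funext j
    show (⨆ i : ℤ, ‖backshift 1 x i‖)⁻¹ • (backshift 1 x) j = (f x) (j - 1)
    rw [S11.ciSup_norm_backshift]
    rfl
  have hG1s : ∀ (k : ℤ) (x : ℤ → V), G1 (backshift k x) = G1 x :=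
    S11.shiftInv_all fun x => by rw [hG1def]; simp only; rw [hfshift, hHshift]
  -- sets in sequence space
  set E0 : Set (ℤ → V) := {x | 1 < ‖x 0‖ ∧ ∀ j < (0:ℤ), ‖x j‖ ≤ 1} with hE0def
  set Efut : Set (ℤ → V) := {x | 1 < ‖x 0‖ ∧ ∀ j : ℤ, 0 < j → ‖x j‖ ≤ 1} with hEfutdef
  set RS : Set (ℤ → V) := {x | InfargmaxAt x 0 ∧ 1 < ‖x 0‖} with hRSdef
  have hE0m : MeasurableSet E0 := (S11.measurableSet_exc 0).inter (S11.measurableSet_before 0)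
  have hEfutm : MeasurableSet Efut := (S11.measurableSet_exc 0).inter (S11.measurableSet_after 0)
  have hRSm : MeasurableSet RS := (S11.measurableSet_infargmax 0).inter (S11.measurableSet_exc 0)
  have hE0S : E0 ⊆ S := fun x hx => hx.1
  have hEfutS : Efut ⊆ S := fun x hx => hx.1
  have hRSS : RS ⊆ S := fun x hx => hx.2
  -- transfer principle between P and ν
  have transfer : ∀ (T : Set (ℤ → V)), MeasurableSet T → T ⊆ S →
      ∀ g : (ℤ → V) → ℝ≥0∞, Measurable g →
      ∫⁻ ω, T.indicator g (Y ω) ∂P = ∫⁻ x, T.indicator g x ∂ν := by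
    intro T hT hTS g hg
    rw [← lintegral_map (hg.indicator hT) hYmeas, hYlaw,
      lintegral_indicator hT, lintegral_indicator hT,
      Measure.restrict_restrict hT, inter_eq_self_of_subset_left hTS]
  -- a.e. exceedance at 0
  have hYS1 : P (Y ⁻¹' S) = 1 := by
    rw [← Measure.map_apply hYmeas hSm, hYlaw, Measure.restrict_apply hSm, inter_self]
    exact hν1
  have hexc_ae : ∀ᵐ ω ∂P, 1 < ‖Y ω 0‖ := by
    rw [ae_iff]
    have : {ω | ¬ 1 < ‖Y ω 0‖} = (Y ⁻¹' S)ᶜ := rfl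
    rw [this, measure_compl (hYmeas hSm) (measure_ne_top P _), hYS1, measure_univ, tsub_self]
  -- the three key ν-identities
  have key1 : ∫⁻ x, E0.indicator G1 x ∂ν = ∫⁻ x, RS.indicator G1 x ∂ν :=
    S11.firstExc_lintegral hinv hnull G1 hG1m hG1s
  have key2 : ∫⁻ x, E0.indicator (fun _ => (1:ℝ≥0∞)) x ∂ν
      = ∫⁻ x, RS.indicator (fun _ => (1:ℝ≥0∞)) x ∂ν :=
    S11.firstExc_lintegral hinv hnull _ measurable_const fun k x => rfl
  have key3 : ∫⁻ x, Efut.indicator (fun _ => (1:ℝ≥0∞)) x ∂ν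
      = ∫⁻ x, RS.indicator (fun _ => (1:ℝ≥0∞)) x ∂ν :=
    S11.lastExc_lintegral hinv hnull _ measurable_const fun k x => rfl
  -- the conditioning set
  set A : Set Ω := {ω | ∀ j : ℤ, j ≤ -1 → ‖Y ω j‖ ≤ 1} with hAdef
  have hAm : MeasurableSet A := by
    have : A = ⋂ j : ℤ, ⋂ (_ : j ≤ -1), {ω | ‖Y ω j‖ ≤ 1} := by ext ω; simp [hAdef]
    rw [this]
    exact MeasurableSet.iInter fun j => MeasurableSet.iInter fun _ =>
      measurableSet_le ((measurable_pi_apply j).comp hYmeas).norm measurable_const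
  set Tf : Set Ω := {ω | ∀ j : ℤ, 1 ≤ j → ‖Y ω j‖ ≤ 1} with hTfdef
  have hTfm : MeasurableSet Tf := by
    have : Tf = ⋂ j : ℤ, ⋂ (_ : 1 ≤ j), {ω | ‖Y ω j‖ ≤ 1} := by ext ω; simp [hTfdef]
    rw [this]
    exact MeasurableSet.iInter fun j => MeasurableSet.iInter fun _ =>
      measurableSet_le ((measurable_pi_apply j).comp hYmeas).norm measurable_const
  -- P A in terms of ν
  have hPA : P A = ∫⁻ x, E0.indicator (fun _ => (1:ℝ≥0∞)) x ∂ν := by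
    rw [← transfer E0 hE0m hE0S _ measurable_const, ← lintegral_indicator_one hAm]
    refine lintegral_congr_ae ?_
    filter_upwards [hexc_ae] with ω h1
    by_cases hmem : ω ∈ A
    · rw [Set.indicator_of_mem hmem,
        Set.indicator_of_mem (show Y ω ∈ E0 from ⟨h1, fun j hj => hmem j (by omega)⟩)]
      rfl
    · rw [Set.indicator_of_notMem hmem,
        Set.indicator_of_notMem
          (show Y ω ∉ E0 from fun hc => hmem fun j hj => hc.2 j (by omega))]
  have hPTf : P Tf = ∫⁻ x, Efut.indicator (fun _ => (1:ℝ≥0∞)) x ∂ν := by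
    rw [← transfer Efut hEfutm hEfutS _ measurable_const, ← lintegral_indicator_one hTfm]
    refine lintegral_congr_ae ?_
    filter_upwards [hexc_ae] with ω h1
    by_cases hmem : ω ∈ Tf
    · rw [Set.indicator_of_mem hmem,
        Set.indicator_of_mem (show Y ω ∈ Efut from ⟨h1, fun j hj => hmem j (by omega)⟩)]
      rfl
    · rw [Set.indicator_of_notMem hmem,
        Set.indicator_of_notMem
          (show Y ω ∉ Efut from fun hc => hmem fun j hj => hc.2 j (by omega))]
  have hϑA : P Tf = P A := by rw [hPA, hPTf, key3, key2]
  -- P A is neither 0 nor ∞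
  have hPA0 : P A ≠ 0 := by
    intro h0
    have hmap0 : P'.map Q = 0 := by
      rw [hQlaw, ProbabilityTheory.cond, Measure.restrict_eq_zero.2 h0, smul_zero,
        Measure.map_zero]
    have h1 : (P'.map Q) univ = 1 := by
      rw [Measure.map_apply hQmeas MeasurableSet.univ]
      exact measure_univ
    rw [hmap0] at h1
    simp at h1
  have hPAtop : P A ≠ ⊤ := measure_ne_top P A
  -- compute E[H(Q)]
  have hcond : ∫⁻ ω', H (Q ω') ∂P' = (P A)⁻¹ * ∫⁻ ω in A, H (f (Y ω)) ∂P := by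
    rw [← lintegral_map hH hQmeas, hQlaw,
      show (fun ω => (⨆ j : ℤ, ‖Y ω j‖)⁻¹ • Y ω) = f ∘ Y from rfl,
      lintegral_map hH (hfm.comp hYmeas), ProbabilityTheory.cond,
      lintegral_smul_measure]
    rfl
  -- the set integral over A equals the ν-integral of RS.indicator G1
  have hsetA : ∫⁻ ω in A, H (f (Y ω)) ∂P = ∫⁻ x, RS.indicator G1 x ∂ν := by
    rw [← key1, ← transfer E0 hE0m hE0S G1 hG1m, ← lintegral_indicator hAm]
    refine lintegral_congr_ae ?_
    filter_upwards [hexc_ae] with ω h1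
    by_cases hmem : ω ∈ A
    · rw [Set.indicator_of_mem hmem,
        Set.indicator_of_mem (show Y ω ∈ E0 from ⟨h1, fun j hj => hmem j (by omega)⟩)]
    · rw [Set.indicator_of_notMem hmem,
        Set.indicator_of_notMem
          (show Y ω ∉ E0 from fun hc => hmem fun j hj => hc.2 j (by omega))]
  -- the RHS equals the same ν-integral
  have hIsetm : MeasurableSet {ω | InfargmaxAt (Θ ω) 0} := hΘm (S11.measurableSet_infargmax 0)
  have hRHS : ∫⁻ ω in {ω | InfargmaxAt (Θ ω) 0}, H (Θ ω) ∂P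
      = ∫⁻ x, RS.indicator G1 x ∂ν := by
    rw [← transfer RS hRSm hRSS G1 hG1m, ← lintegral_indicator hIsetm]
    refine lintegral_congr_ae ?_
    filter_upwards [hexc_ae] with ω h1
    have hpos : (0:ℝ) < ‖Y ω 0‖ := by linarith
    have hcne : ‖Y ω 0‖⁻¹ ≠ 0 := inv_ne_zero (by linarith)
    have hiff : InfargmaxAt (Θ ω) 0 ↔ InfargmaxAt (Y ω) 0 := by
      rw [hΘdef ω]
      exact S11.infargmax_smul hcne
    by_cases hI : InfargmaxAt (Y ω) 0
    · rw [Set.indicator_of_mem (show ω ∈ {ω | InfargmaxAt (Θ ω) 0} from hiff.2 hI),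
        Set.indicator_of_mem (show Y ω ∈ RS from ⟨hI, h1⟩)]
      have hsup : (⨆ j : ℤ, ‖Y ω j‖) = ‖Y ω 0‖ := S11.ciSup_norm_eq hI
      show H (Θ ω) = H (f (Y ω))
      rw [hΘdef ω, hfdef]
      simp only
      rw [hsup]
    · have hnot1 : ω ∉ {ω | InfargmaxAt (Θ ω) 0} := fun hc => hI (hiff.1 hc)
      have hnot2 : Y ω ∉ RS := fun hc => hI hc.1
      rw [Set.indicator_of_notMem hnot1, Set.indicator_of_notMem hnot2]
  -- final computation
  rw [hRHS, hϑA, hcond, hsetA, ← mul_assoc, ENNReal.mul_inv_cancel hPA0 hPAtop,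
    one_mul]
end
end
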